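/- arXiv:2103.08912 — 6 statements merged into one kernel-verified Lean document; each statement's English description precedes it below -/
import Mathlib

section
/- Let v₁, …, v_d ∈ ℤ^r be linearly independent vectors. Then for all integers a₁, …, a_d and positive integer q with gcd(a₁, …, a_d, q) = 1, the gcd of q with all coordinates of a₁v₁ + ⋯ + a_d v_d is at most d! · (max_i ‖v_i‖_∞)^d. -/
open Matrix

/-- Auxiliary: a matrix over a field with linearly independent rows has a
square submatrix with nonzero determinant. -/
lemma aux_sub_det {K : Type*} [Field K] {d r : ℕ} (M : Matrix (Fin d) (Fin r) K)
    (h : LinearIndependent K (fun i => M i)) :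
    ∃ j : Fin d → Fin r, (M.submatrix id j).det ≠ 0 := by
  classical
  have hrank : M.rank = d := by
    have h1 := Matrix.rank_transpose Mᵀ
    rw [Matrix.transpose_transpose] at h1
    rw [h1, Matrix.rank_eq_finrank_span_cols, Matrix.col, Matrix.transpose_transpose]
    simpa using finrank_span_eq_card h
  have hC : Module.finrank K (Submodule.span K (Set.range Mᵀ)) = d := by
    exact (Matrix.rank_eq_finrank_span_cols M).symm.trans hrank
  have htop : Submodule.span K (Set.range Mᵀ) = ⊤ := by
    apply Submodule.eq_top_of_finrank_eq
    rw [hC, Module.finrank_pi]; simp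
  obtain ⟨b, hbsub, hbspan, hbli⟩ := exists_linearIndependent K (Set.range Mᵀ)
  have hbfin : b.Finite := hbli.setFinite
  haveI : Fintype b := hbfin.fintype
  have hcard : Fintype.card b = d := by
    have := finrank_span_set_eq_card hbli
    rw [Set.toFinset_card] at this
    rw [← this, hbspan]; exact hC
  let e : Fin d ≃ b := Fintype.equivOfCardEq (by simp [hcard])
  choose jm hjm using fun x : b => hbsub x.2
  refine ⟨fun k => jm (e k), ?_⟩
  have hunit : IsUnit (M.submatrix id (fun k => jm (e k))) := by
    rw [← Matrix.linearIndependent_cols_iff_isUnit]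
    have : (fun k => (M.submatrix id fun k => jm (e k))ᵀ k) = fun k => ((e k : Fin d → K)) := by
      funext k
      have := hjm (e k)
      ext i
      simp [Matrix.submatrix, Matrix.transpose]
      exact congrFun this i
    rw [show (M.submatrix id fun k => jm (e k)).col = fun k => (M.submatrix id fun k => jm (e k))ᵀ k from rfl, this]
    exact hbli.comp e e.injective
  have := hunit.map (Matrix.detMonoidHom)
  simpa using this.ne_zero

lemma natAbs_sum_le' {ι : Type*} (s : Finset ι) (f : ι → ℤ) :
    (∑ i ∈ s, f i).natAbs ≤ ∑ i ∈ s, (f i).natAbs := by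
  classical
  induction s using Finset.induction with
  | empty => simp
  | insert _ _ h ih =>
    rw [Finset.sum_insert h, Finset.sum_insert h]
    exact (Int.natAbs_add_le _ _).trans (by omega)

/-- divisor estimate for integer combinations of linearly
independent integer vectors. -/
theorem stmt_0 (d r : ℕ) (v : Fin d → Fin r → ℤ)
    (hv : LinearIndependent ℤ v)
    (a : Fin d → ℤ) (q : ℕ) (hq : 0 < q)
    (hgcd : Nat.gcd (Finset.univ.gcd fun i => (a i).natAbs) q = 1) :
    Nat.gcd (Finset.univ.gcd fun j => ((∑ i, a i • v i) j).natAbs) q ≤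
      d.factorial *
        (Finset.univ.sup fun i => Finset.univ.sup fun j => (v i j).natAbs) ^ d := by
  classical
  set w : Fin r → ℤ := ∑ i, a i • v i with hw
  set G : ℕ := Finset.univ.gcd fun i => (a i).natAbs with hG
  set g : ℕ := Nat.gcd (Finset.univ.gcd fun j => (w j).natAbs) q with hg
  set Mx : ℕ := Finset.univ.sup fun i => Finset.univ.sup fun j => (v i j).natAbs with hMx
  -- cast to ℚ
  have hLin : LinearIndependent ℚ (fun i => fun j => ((v i j : ℚ))) := by
    rw [← LinearIndependent.iff_fractionRing ℤ ℚ]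
    let L : (Fin r → ℤ) →ₗ[ℤ] (Fin r → ℚ) :=
      LinearMap.pi fun j => (Algebra.linearMap ℤ ℚ).comp (LinearMap.proj j)
    have hLinj : Function.Injective L := by
      intro x y hxy
      funext j
      have := congrFun hxy j
      simpa [L] using this
    exact hv.map' L (LinearMap.ker_eq_bot.2 hLinj)
  have hM : LinearIndependent ℚ
      (fun i => (Matrix.of (fun i j => ((v i j : ℚ)))) i) := hLin
  obtain ⟨jm, hdet⟩ := aux_sub_det _ hM
  -- integer submatrix
  set B : Matrix (Fin d) (Fin d) ℤ := Matrix.of fun k l => v k (jm l) with hB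
  have hdetB : B.det ≠ 0 := by
    intro h0
    apply hdet
    have : ((Matrix.of (fun i j => ((v i j : ℚ)))).submatrix id jm) =
        (Int.castRingHom ℚ).mapMatrix B := by
      ext k l; simp [B]
    rw [this, ← RingHom.map_det, h0]
    simp
  -- g divides everything
  have hgq : g ∣ q := Nat.gcd_dvd_right _ _
  have hgw : ∀ j, (g : ℤ) ∣ w j := by
    intro j
    have h1 : g ∣ (w j).natAbs :=
      (Nat.gcd_dvd_left _ _).trans (Finset.gcd_dvd (Finset.mem_univ j))
    exact Int.dvd_natAbs.1 (Int.natCast_dvd_natCast.2 h1)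
  -- Cramer
  have hkey : ∀ i, (g : ℤ) ∣ B.det * a i := by
    intro i
    have hmv : Bᵀ *ᵥ a = fun k => w (jm k) := by
      funext k
      simp [Matrix.mulVec, dotProduct, hw, B, Finset.sum_apply, mul_comm]
    have hid : B.det • a = (Bᵀ.adjugate) *ᵥ (Bᵀ *ᵥ a) := by
      rw [Matrix.mulVec_mulVec, Matrix.adjugate_mul, Matrix.det_transpose,
        Matrix.smul_mulVec, Matrix.one_mulVec]
    have := congrFun hid i
    rw [Pi.smul_apply, smul_eq_mul] at this
    rw [this, hmv]
    simp only [Matrix.mulVec, dotProduct]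
    apply Finset.dvd_sum
    intro k _
    exact Dvd.dvd.mul_left (hgw (jm k)) _
  -- coprimality
  have hcop : Nat.Coprime g G := by
    have h1 : Nat.Coprime G q := hgcd
    exact ((h1.coprime_dvd_right hgq)).symm
  have hdvd : g ∣ B.det.natAbs := by
    apply hcop.dvd_of_dvd_mul_right
    have h1 : g ∣ Finset.univ.gcd fun i => B.det.natAbs * (a i).natAbs := by
      apply Finset.dvd_gcd
      intro i _
      have := hkey i
      have h2 : g ∣ (B.det * a i).natAbs := Int.natCast_dvd_natCast.1 (Int.dvd_natAbs.2 this)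
      rwa [Int.natAbs_mul] at h2
    rwa [Finset.gcd_mul_left, normalize_eq] at h1
  have hle : g ≤ B.det.natAbs :=
    Nat.le_of_dvd (Int.natAbs_pos.2 hdetB) hdvd
  refine hle.trans ?_
  -- determinant bound
  rw [Matrix.det_apply]
  calc (∑ σ : Equiv.Perm (Fin d), Equiv.Perm.sign σ • ∏ k, B (σ k) k).natAbs
      ≤ ∑ σ : Equiv.Perm (Fin d), (Equiv.Perm.sign σ • ∏ k, B (σ k) k).natAbs := by
        exact natAbs_sum_le' _ _
    _ ≤ ∑ _σ : Equiv.Perm (Fin d), Mx ^ d := by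
        apply Finset.sum_le_sum
        intro σ _
        have h1 : (Equiv.Perm.sign σ • ∏ k, B (σ k) k).natAbs
            = (∏ k, B (σ k) k).natAbs := by
          rcases Int.units_eq_one_or (Equiv.Perm.sign σ) with h | h <;>
            simp [h, Units.smul_def]
        rw [h1]
        rw [show (∏ k, B (σ k) k).natAbs = ∏ k, (B (σ k) k).natAbs from
          map_prod Int.natAbsHom _ _]
        have h2 : ∀ k ∈ Finset.univ, (B (σ k) k).natAbs ≤ Mx := by
          intro k _
          refine le_trans ?_ (Finset.le_sup (Finset.mem_univ (σ k)))
          exact Finset.le_sup (f := fun j => (v (σ k) j).natAbs) (Finset.mem_univ (jm k))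
        simpa using Finset.prod_le_pow_card _ _ _ h2
    _ = d.factorial * Mx ^ d := by
        rw [Finset.sum_const, smul_eq_mul, Finset.card_univ, Fintype.card_perm,
          Fintype.card_fin]
end

section
/- Let V : ℤ^d → ℤ^d be an injective linear map given by an integer matrix, and let a ∈ ℤ^d and q a positive integer such that gcd(a₁, …, a_d, q) = 1. Then the gcd of q with all entries of V(a) is at most |det V|. -/
/-- if `V` is an injective integer matrix then the gcd of `q`
with the entries of `V a` is at most `|det V|`, provided `gcd(a, q) = 1`. -/
theorem stmt_1 (d : ℕ) (V : Matrix (Fin d) (Fin d) ℤ)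
    (hV : Function.Injective V.mulVec)
    (a : Fin d → ℤ) (q : ℕ) (hq : 0 < q)
    (hgcd : Nat.gcd (Finset.univ.gcd fun i => (a i).natAbs) q = 1) :
    Nat.gcd (Finset.univ.gcd fun i => (V.mulVec a i).natAbs) q ≤ V.det.natAbs := by
  set g := Nat.gcd (Finset.univ.gcd fun i => (V.mulVec a i).natAbs) q with hg
  have hdet : V.det ≠ 0 := by
    intro h
    obtain ⟨v, hv, hv0⟩ := Matrix.exists_mulVec_eq_zero_iff.mpr h
    exact hv (hV (by rw [hv0, Matrix.mulVec_zero]))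
  -- g divides each entry of V *ᵥ a
  have hdvd : ∀ j, (g : ℤ) ∣ V.mulVec a j := by
    intro j
    have : g ∣ (V.mulVec a j).natAbs :=
      dvd_trans (Nat.gcd_dvd_left _ _) (Finset.gcd_dvd (Finset.mem_univ j))
    exact Int.dvd_natAbs.mp (Int.natCast_dvd_natCast.mpr this)
  -- adjugate identity: det V • a = adjugate V *ᵥ (V *ᵥ a)
  have hadj : ∀ i, V.det * a i = (V.adjugate.mulVec (V.mulVec a)) i := by
    intro i
    rw [Matrix.mulVec_mulVec, Matrix.adjugate_mul, Matrix.smul_mulVec,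
      Matrix.one_mulVec]
    rfl
  have hdvd2 : ∀ i, g ∣ V.det.natAbs * (a i).natAbs := by
    intro i
    have : (g : ℤ) ∣ V.det * a i := by
      rw [hadj i]
      simp only [Matrix.mulVec, dotProduct]
      exact Finset.dvd_sum fun j _ => Dvd.dvd.mul_left (hdvd j) _
    have := Int.natAbs_dvd_natAbs.mpr this
    simpa [Int.natAbs_mul] using this
  have hG : g ∣ V.det.natAbs * Finset.univ.gcd fun i => (a i).natAbs := by
    have : g ∣ Finset.univ.gcd fun i => V.det.natAbs * (a i).natAbs :=
      Finset.dvd_gcd fun i _ => hdvd2 i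
    simpa [Finset.gcd_mul_left] using this
  have hcop : Nat.Coprime g (Finset.univ.gcd fun i => (a i).natAbs) :=
    Nat.Coprime.coprime_dvd_left (Nat.gcd_dvd_right _ _)
      (Nat.Coprime.symm hgcd)
  have : g ∣ V.det.natAbs := by
    rw [mul_comm] at hG
    exact (Nat.Coprime.dvd_of_dvd_mul_left hcop hG)
  exact Nat.le_of_dvd (Int.natAbs_pos.mpr hdet) this
end

section
/- Suppose there exist nonzero v, w ∈ ℤ^d and a matrix A(x) ∈ M_{d×d}(ℤ[x]) such that vᵗ·A(x)·w is a constant polynomial. Then the set {A(n) : n ∈ ℤ} is not Glasner for the action on 𝕋^d: there exists an infinite set Y ⊆ 𝕋^d and ε > 0 such that for every n ∈ ℤ the set A(n)Y = {A(n)y : y ∈ Y} is not ε-dense in 𝕋^d. -/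
open Polynomial Matrix

set_option maxHeartbeats 1000000 in
/-- if `vᵗ A(x) w` is a constant polynomial for some nonzero
integer vectors `v, w`, then `{A(n) : n ∈ ℤ}` is not Glasner for the action
on `𝕋^d`. -/
theorem stmt_5 (d : ℕ) (A : Matrix (Fin d) (Fin d) (Polynomial ℤ))
    (v w : Fin d → ℤ) (hv : v ≠ 0) (hw : w ≠ 0)
    (hconst : ∃ c : ℤ,
      (fun i => C (v i)) ⬝ᵥ A.mulVec (fun j => C (w j)) = C c) :
    ∃ Y : Set (Fin d → AddCircle (1 : ℝ)), Y.Infinite ∧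
      ∃ ε > (0 : ℝ), ∀ n : ℤ, ∃ z : Fin d → AddCircle (1 : ℝ),
        ∀ y ∈ Y, ε < dist z (fun i => ∑ j, ((A.map (eval n)) i j) • y j) := by
  classical
  obtain ⟨c, hc⟩ := hconst
  obtain ⟨i₀, hi₀⟩ : ∃ i, w i ≠ 0 := by
    by_contra h; push_neg at h; exact hw (funext h)
  obtain ⟨i₁, hi₁⟩ : ∃ i, v i ≠ 0 := by
    by_contra h; push_neg at h; exact hv (funext h)
  -- the projection map
  set q : ℝ →+ AddCircle (1 : ℝ) :=
    QuotientAddGroup.mk' (AddSubgroup.zmultiples (1 : ℝ)) with hqdef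
  have hqcoe : ∀ x : ℝ, q x = (x : AddCircle (1 : ℝ)) := fun x => rfl
  have hqsmul : ∀ (m : ℤ) (x : ℝ), m • q x = q (m * x) := by
    intro m x
    rw [← map_zsmul q m x, zsmul_eq_mul]
  have hqeq : ∀ a b : ℝ, q a = q b → ∃ m : ℤ, a - b = m := by
    intro a b h
    have h2 : a - b ∈ AddSubgroup.zmultiples (1 : ℝ) :=
      (QuotientAddGroup.eq_iff_sub_mem).mp h
    obtain ⟨m, hm⟩ := h2
    exact ⟨m, by simpa using hm.symm⟩
  -- norm lower bound on the middle of the circle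
  have hnormq : ∀ u : ℝ, (1/4 : ℝ) ≤ u → u ≤ 3/4 → (1/4 : ℝ) ≤ ‖q u‖ := by
    intro u h1 h2
    rw [hqcoe, AddCircle.norm_eq]
    simp only [inv_one, one_mul, mul_one]
    rcases le_or_gt (round u) 0 with hr | hr
    · have : (round u : ℝ) ≤ 0 := by exact_mod_cast hr
      rw [abs_of_nonneg (by linarith)]; linarith
    · have hr1 : (1 : ℤ) ≤ round u := hr
      have : (1 : ℝ) ≤ (round u : ℝ) := by exact_mod_cast hr1
      rw [abs_of_nonpos (by linarith)]; linarith
  -- evaluate the constant identity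
  have hcn : ∀ n : ℤ, ∑ i, v i * ∑ j, (A i j).eval n * w j = c := by
    intro n
    have h := congrArg (eval n) hc
    simpa [dotProduct, Matrix.mulVec, eval_finset_sum] using h
  -- parameters
  set δ : ℝ := 1 / (4 * (|(c : ℝ)| + 1) * (|(w i₀ : ℝ)| + 1)) with hδdef
  have hδpos : 0 < δ := by
    apply div_pos one_pos
    positivity
  have hδc : δ * |(c : ℝ)| < 1/4 := by
    rw [hδdef, div_mul_eq_mul_div, one_mul, div_lt_iff₀ (by positivity)]
    nlinarith [abs_nonneg (c : ℝ), abs_nonneg (w i₀ : ℝ)]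
  have hδw : δ * |(w i₀ : ℝ)| < 1 := by
    rw [hδdef, div_mul_eq_mul_div, one_mul, div_lt_iff₀ (by positivity)]
    nlinarith [abs_nonneg (c : ℝ), abs_nonneg (w i₀ : ℝ)]
  set t : ℕ → ℝ := fun k => δ / (k + 1) with htdef
  have ht0 : ∀ k, 0 < t k := fun k => div_pos hδpos (by positivity)
  have htδ : ∀ k, t k ≤ δ := by
    intro k
    rw [htdef]
    rw [div_le_iff₀ (by positivity)]
    nlinarith [hδpos, (Nat.cast_nonneg k : (0:ℝ) ≤ k)]
  have htinj : Function.Injective t := by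
    intro k k' h
    rw [htdef] at h
    rw [div_eq_div_iff (by positivity : (0:ℝ) < (k:ℝ)+1).ne'
      (by positivity : (0:ℝ) < (k':ℝ)+1).ne'] at h
    have h2 := mul_left_cancel₀ hδpos.ne' h
    exact_mod_cast Nat.cast_injective (by linarith : (k : ℝ) = (k' : ℝ))
  set f : ℕ → (Fin d → AddCircle (1 : ℝ)) := fun k i => q (t k * w i) with hfdef
  have hfinj : Function.Injective f := by
    intro k k' h
    have h0 : q (t k * w i₀) = q (t k' * w i₀) := congrFun h i₀
    obtain ⟨m, hm⟩ := hqeq _ _ h0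
    have hmabs : |(m : ℝ)| < 1 := by
      rw [← hm]
      have : t k * w i₀ - t k' * w i₀ = (t k - t k') * w i₀ := by ring
      rw [this, abs_mul]
      have h1 : |t k - t k'| ≤ δ := by
        rw [abs_sub_le_iff]
        constructor <;> nlinarith [ht0 k, ht0 k', htδ k, htδ k']
      calc |t k - t k'| * |(w i₀ : ℝ)| ≤ δ * |(w i₀ : ℝ)| :=
            mul_le_mul_of_nonneg_right h1 (abs_nonneg _)
        _ < 1 := hδw
    have hm0 : m = 0 := by
      by_contra hm0
      have : (1 : ℝ) ≤ |(m : ℝ)| := by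
        have : (1 : ℤ) ≤ |m| := Int.one_le_abs hm0
        exact_mod_cast this
      linarith
    rw [hm0] at hm
    have : t k * w i₀ = t k' * w i₀ := by push_cast at hm; linarith
    have hw0 : ((w i₀ : ℝ)) ≠ 0 := Int.cast_ne_zero.mpr hi₀
    exact htinj (mul_right_cancel₀ hw0 this)
  refine ⟨Set.range f, Set.infinite_range_of_injective hfinj, ?_⟩
  -- the ε
  set M : ℝ := ∑ i, |(v i : ℝ)| with hMdef
  have hM1 : (1 : ℝ) ≤ M := by
    have h1 : (1 : ℝ) ≤ |(v i₁ : ℝ)| := by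
      have : (1 : ℤ) ≤ |v i₁| := Int.one_le_abs hi₁
      exact_mod_cast this
    calc (1 : ℝ) ≤ |(v i₁ : ℝ)| := h1
      _ ≤ M := by
          rw [hMdef]
          exact Finset.single_le_sum (f := fun i => |(v i : ℝ)|)
            (fun i _ => abs_nonneg _) (Finset.mem_univ i₁)
  have hMpos : (0 : ℝ) < M := lt_of_lt_of_le one_pos hM1
  refine ⟨1 / (8 * M), by positivity, ?_⟩
  intro n
  set z : Fin d → AddCircle (1 : ℝ) :=
    fun i => q (if i = i₁ then 1 / (2 * (v i₁ : ℝ)) else 0) with hzdef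
  refine ⟨z, ?_⟩
  rintro y ⟨k, rfl⟩
  set g : Fin d → AddCircle (1 : ℝ) :=
    fun i => ∑ j, ((A.map (eval n)) i j) • f k j with hgdef
  -- value of the linear functional on z
  have hLz : ∑ i, v i • z i = q (1/2) := by
    rw [Finset.sum_eq_single i₁]
    · rw [hzdef]; simp only [if_pos rfl, if_true]
      rw [hqsmul]
      congr 1
      have : ((v i₁ : ℝ)) ≠ 0 := Int.cast_ne_zero.mpr hi₁
      field_simp
    · intro i _ hi
      rw [hzdef]; simp only [if_neg hi, map_zero, smul_zero]
    · intro h; exact absurd (Finset.mem_univ i₁) h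
  -- value on g
  have hLg : ∑ i, v i • g i = q (t k * c) := by
    have hgi : ∀ i, g i = q (t k * ∑ j, (((A i j).eval n : ℤ) : ℝ) * w j) := by
      intro i
      calc g i = ∑ j, q ((((A i j).eval n : ℤ) : ℝ) * (t k * w j)) := by
            refine Finset.sum_congr rfl fun j _ => ?_
            show eval n (A i j) • q (t k * (w j : ℝ)) = _
            exact hqsmul _ _
        _ = q (∑ j, (((A i j).eval n : ℤ) : ℝ) * (t k * w j)) := (map_sum q _ _).symm
        _ = q (t k * ∑ j, (((A i j).eval n : ℤ) : ℝ) * w j) := by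
            rw [Finset.mul_sum]
            exact congrArg q (Finset.sum_congr rfl fun j _ => by ring)
    calc ∑ i, v i • g i
        = ∑ i, q ((v i : ℝ) * (t k * ∑ j, (((A i j).eval n : ℤ) : ℝ) * w j)) :=
          Finset.sum_congr rfl fun i _ => by rw [hgi, hqsmul]
      _ = q (∑ i, (v i : ℝ) * (t k * ∑ j, (((A i j).eval n : ℤ) : ℝ) * w j)) :=
          (map_sum q _ _).symm
      _ = q (t k * c) := by
          congr 1
          have h := hcn n
          have h' : ∑ i, (v i : ℝ) * ∑ j, (((A i j).eval n : ℤ) : ℝ) * w j = (c : ℝ) := by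
            exact_mod_cast congrArg (fun x : ℤ => (x : ℝ)) h
          calc ∑ i, (v i : ℝ) * (t k * ∑ j, (((A i j).eval n : ℤ) : ℝ) * w j)
              = t k * ∑ i, (v i : ℝ) * ∑ j, (((A i j).eval n : ℤ) : ℝ) * w j := by
                rw [Finset.mul_sum]; exact Finset.sum_congr rfl fun i _ => by ring
            _ = t k * c := by rw [h']
  -- the distance between the functional values
  have hdistL : (1/4 : ℝ) ≤ dist (∑ i, v i • z i) (∑ i, v i • g i) := by
    rw [hLz, hLg, dist_eq_norm, ← map_sub]
    refine hnormq _ ?_ ?_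
    · have htc : |t k * (c : ℝ)| ≤ δ * |(c : ℝ)| := by
        rw [abs_mul]
        apply mul_le_mul_of_nonneg_right _ (abs_nonneg _)
        rw [abs_of_pos (ht0 k)]; exact htδ k
      have := abs_le.mp (le_trans htc (le_of_lt hδc))
      linarith [this.1, this.2]
    · have htc : |t k * (c : ℝ)| ≤ δ * |(c : ℝ)| := by
        rw [abs_mul]
        apply mul_le_mul_of_nonneg_right _ (abs_nonneg _)
        rw [abs_of_pos (ht0 k)]; exact htδ k
      have := abs_le.mp (le_trans htc (le_of_lt hδc))
      linarith [this.1, this.2]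
  -- Lipschitz bound
  have hLip : dist (∑ i, v i • z i) (∑ i, v i • g i) ≤ M * dist z g := by
    rw [dist_eq_norm, ← Finset.sum_sub_distrib]
    calc ‖∑ i, (v i • z i - v i • g i)‖
        ≤ ∑ i, ‖v i • z i - v i • g i‖ := norm_sum_le _ _
      _ ≤ ∑ i, |(v i : ℝ)| * dist z g := by
          apply Finset.sum_le_sum
          intro i _
          rw [← smul_sub]
          calc ‖v i • (z i - g i)‖ ≤ ‖v i‖ * ‖z i - g i‖ := norm_zsmul_le _ _
            _ = |(v i : ℝ)| * dist (z i) (g i) := by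
                rw [Int.norm_eq_abs, dist_eq_norm]; try push_cast; try ring
            _ ≤ |(v i : ℝ)| * dist z g :=
                mul_le_mul_of_nonneg_left (dist_le_pi_dist z g i) (abs_nonneg _)
      _ = M * dist z g := by rw [hMdef, Finset.sum_mul]
  have hfinal : (1 / (4 * M) : ℝ) ≤ dist z g := by
    rw [div_le_iff₀ (by positivity)]
    have := le_trans hdistL hLip
    nlinarith
  calc (1 / (8 * M) : ℝ) < 1 / (4 * M) := by
        apply div_lt_div_of_pos_left one_pos (by positivity)
        linarith
    _ ≤ dist z g := hfinal
    _ = dist z (fun i => ∑ j, ((A.map (eval n)) i j) • f k j) := rfl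
end

section
/- Let d > 1 and Γ = ⟨S⟩ ≤ SL_d(ℤ) act irreducibly on ℝ^d, with S_r the set of products of at most r elements of S. Then for every nonzero v ∈ ℝ^d, the set S_d·v is hyperplane-fleeing: it is not contained in any proper affine subspace W + a of ℝ^d. -/
open Matrix

/-- The action of an integral matrix group element on `ℝ^d`. -/
noncomputable def sl_act {d : ℕ} (g : Matrix.SpecialLinearGroup (Fin d) ℤ)
    (v : Fin d → ℝ) : Fin d → ℝ :=
  ((g : Matrix (Fin d) (Fin d) ℤ).map (Int.cast : ℤ → ℝ)).mulVec v

/-- The ball of radius `r` in the Cayley graph: products of at most `r`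
elements of `S` (including the identity as the empty product). -/
def cayleyBall {d : ℕ} (S : Set (Matrix.SpecialLinearGroup (Fin d) ℤ))
    (r : ℕ) : Set (Matrix.SpecialLinearGroup (Fin d) ℤ) :=
  {g | ∃ l : List (Matrix.SpecialLinearGroup (Fin d) ℤ),
    l.length ≤ r ∧ (∀ x ∈ l, x ∈ S) ∧ l.prod = g}

/-- `sl_act g` as a linear map. -/
noncomputable def slLin {d : ℕ} (g : Matrix.SpecialLinearGroup (Fin d) ℤ) :
    (Fin d → ℝ) →ₗ[ℝ] (Fin d → ℝ) :=
  ((g : Matrix (Fin d) (Fin d) ℤ).map (Int.cast : ℤ → ℝ)).mulVecLin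

lemma slLin_apply {d : ℕ} (g : Matrix.SpecialLinearGroup (Fin d) ℤ) (v : Fin d → ℝ) :
    slLin g v = sl_act g v := rfl

lemma map_cast_eq {d : ℕ} (g : Matrix.SpecialLinearGroup (Fin d) ℤ) :
    (g : Matrix (Fin d) (Fin d) ℤ).map (Int.cast : ℤ → ℝ)
      = (g : Matrix (Fin d) (Fin d) ℤ).map ⇑(Int.castRingHom ℝ) := by
  simp [Int.coe_castRingHom]

lemma slLin_mul {d : ℕ} (g h : Matrix.SpecialLinearGroup (Fin d) ℤ) :
    slLin (g * h) = (slLin g).comp (slLin h) := by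
  unfold slLin
  rw [map_cast_eq, map_cast_eq, map_cast_eq, Matrix.SpecialLinearGroup.coe_mul,
    Matrix.map_mul, Matrix.mulVecLin_mul]

lemma slLin_one {d : ℕ} : slLin (1 : Matrix.SpecialLinearGroup (Fin d) ℤ) = LinearMap.id := by
  unfold slLin
  rw [map_cast_eq, Matrix.SpecialLinearGroup.coe_one, Matrix.map_one _ (map_zero _) (map_one _),
    Matrix.mulVecLin_one]

lemma sl_act_one {d : ℕ} (v : Fin d → ℝ) :
    sl_act (1 : Matrix.SpecialLinearGroup (Fin d) ℤ) v = v := by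
  rw [← slLin_apply, slLin_one]; rfl

lemma sl_act_mul {d : ℕ} (g h : Matrix.SpecialLinearGroup (Fin d) ℤ) (v : Fin d → ℝ) :
    sl_act (g * h) v = sl_act g (sl_act h v) := by
  rw [← slLin_apply, ← slLin_apply, ← slLin_apply, slLin_mul]; rfl

/-- If a submodule is mapped into itself by `slLin g`, it is mapped onto itself. -/
lemma map_slLin_eq {d : ℕ} (g : Matrix.SpecialLinearGroup (Fin d) ℤ)
    (U : Submodule ℝ (Fin d → ℝ)) (h : U.map (slLin g) ≤ U) : U.map (slLin g) = U := by
  have h1 : slLin (d := d) g ∘ₗ slLin g⁻¹ = LinearMap.id := by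
    rw [← slLin_mul, mul_inv_cancel, slLin_one]
  have h2 : slLin (d := d) g⁻¹ ∘ₗ slLin g = LinearMap.id := by
    rw [← slLin_mul, inv_mul_cancel, slLin_one]
  have hfr : Module.finrank ℝ (U.map (slLin g)) = Module.finrank ℝ U :=
    (LinearEquiv.ofLinear (slLin g) (slLin g⁻¹) h1 h2).finrank_map_eq U
  exact Submodule.eq_of_le_of_finrank_le h hfr.symm.le

/-- if `d > 1` and `Γ = ⟨S⟩ ≤ SL_d(ℤ)` acts irreducibly on `ℝ^d`,
then for every nonzero `v` the set `S_d v` is hyperplane-fleeing. -/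
theorem stmt_9 (d : ℕ) (hd : 1 < d) (S : Set (Matrix.SpecialLinearGroup (Fin d) ℤ))
    (hirr : ∀ W : Submodule ℝ (Fin d → ℝ),
      (∀ g ∈ Subgroup.closure S, ∀ x ∈ W, sl_act g x ∈ W) → W = ⊥ ∨ W = ⊤)
    (v : Fin d → ℝ) (hv : v ≠ 0) :
    ¬∃ (W : Submodule ℝ (Fin d → ℝ)) (a : Fin d → ℝ), W ≠ ⊤ ∧
      ∀ g ∈ cayleyBall S d, sl_act g v - a ∈ W := by
  rintro ⟨W, a, hW, hball⟩
  -- the identity is in every ball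
  have hone : ∀ r, (1 : Matrix.SpecialLinearGroup (Fin d) ℤ) ∈ cayleyBall S r := by
    intro r; exact ⟨[], by simp, by simp, by simp⟩
  have hs_mem : ∀ r, ∀ s ∈ S, s ∈ cayleyBall S (r + 1) := by
    intro r s hs; exact ⟨[s], by simp, by simp [hs], by simp⟩
  have hmul_mem : ∀ r s g, s ∈ S → g ∈ cayleyBall S r → s * g ∈ cayleyBall S (r + 1) := by
    rintro r s g hs ⟨l, hl1, hl2, hl3⟩
    exact ⟨s :: l, by simpa using hl1, by
      intro x hx; rcases List.mem_cons.mp hx with h | h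
      · exact h ▸ hs
      · exact hl2 x h, by simp [hl3]⟩
  have hmono_ball : ∀ r, cayleyBall S r ⊆ cayleyBall S (r + 1) := by
    rintro r g ⟨l, hl1, hl2, hl3⟩; exact ⟨l, hl1.trans (Nat.le_succ r), hl2, hl3⟩
  -- the chain of spans
  set U : ℕ → Submodule ℝ (Fin d → ℝ) :=
    fun r => Submodule.span ℝ ((fun g => sl_act g v - v) '' cayleyBall S r) with hU
  have hgen : ∀ r, ∀ g ∈ cayleyBall S r, sl_act g v - v ∈ U r := by
    intro r g hg
    exact Submodule.subset_span ⟨g, hg, rfl⟩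
  have hUmono : ∀ r, U r ≤ U (r + 1) := by
    intro r
    exact Submodule.span_mono (Set.image_mono (hmono_ball r))
  have hUmono' : ∀ {r r'}, r ≤ r' → U r ≤ U r' := by
    intro r r' h
    induction r' with
    | zero => simp_all
    | succ n ih =>
      rcases Nat.lt_or_ge r (n+1) with h' | h'
      · exact (ih (Nat.lt_succ_iff.mp h')).trans (hUmono n)
      · have : r = n + 1 := le_antisymm h h'
        exact this ▸ le_rfl
  -- U d ≤ W
  have hUdW : U d ≤ W := by
    rw [hU, Submodule.span_le]
    rintro _ ⟨g, hg, rfl⟩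
    have h1 := hball g hg
    have h2 := hball 1 (hone d)
    rw [sl_act_one] at h2
    have := W.sub_mem h1 h2
    simpa using this
  -- either the chain stabilizes below d, or U d = ⊤
  by_cases hstab : ∃ r < d, U (r + 1) ≤ U r
  · obtain ⟨r, hrd, hstabr⟩ := hstab
    -- U r is invariant under each s ∈ S
    have hinv : ∀ s ∈ S, (U r).map (slLin s) = U r := by
      intro s hs
      apply map_slLin_eq
      rw [hU]
      rw [Submodule.map_span]
      rw [Submodule.span_le]
      rintro _ ⟨_, ⟨g, hg, rfl⟩, rfl⟩
      have key : slLin s (sl_act g v - v)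
          = (sl_act (s * g) v - v) - (sl_act s v - v) := by
        rw [sl_act_mul]
        have : slLin s (sl_act g v - v) = sl_act s (sl_act g v) - sl_act s v := by
          rw [map_sub]; simp only [slLin_apply]
        rw [this]; abel
      rw [key]
      exact hstabr ((U (r+1)).sub_mem
        (hgen (r+1) _ (hmul_mem r s g hs hg))
        (hgen (r+1) _ (hs_mem r s hs)))
    -- hence invariant under the closure subgroup
    have hsub : Subgroup.closure S ≤
        { carrier := {g | (U r).map (slLin g) = U r}
          one_mem' := by simp [slLin_one]
          mul_mem' := by
            intro g h hg hh
            simp only [Set.mem_setOf_eq] at *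
            rw [slLin_mul, Submodule.map_comp, hh, hg]
          inv_mem' := by
            intro g hg
            simp only [Set.mem_setOf_eq] at *
            conv_lhs => rw [← hg]
            rw [← Submodule.map_comp, ← slLin_mul, inv_mul_cancel, slLin_one,
              Submodule.map_id] } := by
      rw [Subgroup.closure_le]
      intro s hs
      exact hinv s hs
    have hinvG : ∀ g ∈ Subgroup.closure S, ∀ x ∈ U r, sl_act g x ∈ U r := by
      intro g hg x hx
      have := hsub hg
      simp only [Subgroup.mem_mk, Set.mem_setOf_eq] at this
      rw [← slLin_apply, ← this]
      exact Submodule.mem_map_of_mem hx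
    rcases hirr (U r) hinvG with hbot | htop
    · -- U r = ⊥ : then g v = v for all g in the ball of radius r+1
      have hfix : ∀ s ∈ S, sl_act s v = v := by
        intro s hs
        have : sl_act s v - v ∈ U r := hstabr (hgen (r+1) s (hs_mem r s hs))
        rw [hbot, Submodule.mem_bot, sub_eq_zero] at this
        exact this
      -- span of v is invariant
      have hfixG : ∀ g ∈ Subgroup.closure S, sl_act g v = v := by
        intro g hg
        have hsub2 : Subgroup.closure S ≤
            { carrier := {g | sl_act g v = v}
              one_mem' := sl_act_one v
              mul_mem' := by
                intro g h hg hh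
                simp only [Set.mem_setOf_eq] at *
                rw [sl_act_mul, hh, hg]
              inv_mem' := by
                intro g hg
                simp only [Set.mem_setOf_eq] at *
                conv_lhs => rw [← hg]
                rw [← sl_act_mul, inv_mul_cancel, sl_act_one] } := by
          rw [Subgroup.closure_le]; exact hfix
        exact hsub2 hg
      have hinvV : ∀ g ∈ Subgroup.closure S, ∀ x ∈ Submodule.span ℝ {v},
          sl_act g x ∈ Submodule.span ℝ {v} := by
        intro g hg x hx
        obtain ⟨c, rfl⟩ := Submodule.mem_span_singleton.mp hx
        have : sl_act g (c • v) = c • sl_act g v := by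
          simp only [← slLin_apply]; exact (slLin g).map_smul c v
        rw [this, hfixG g hg]
        exact Submodule.smul_mem _ c (Submodule.mem_span_singleton_self v)
      rcases hirr _ hinvV with h | h
      · have hm : v ∈ Submodule.span ℝ {v} := Submodule.mem_span_singleton_self v
        rw [h] at hm
        exact hv (by simpa using hm)
      · have h1 : Module.finrank ℝ (Submodule.span ℝ {v}) = 1 := finrank_span_singleton hv
        rw [h] at h1
        rw [finrank_top, Module.finrank_fin_fun] at h1
        omega
    · -- U r = ⊤ : contradiction with U d ≤ W
      have : (⊤ : Submodule ℝ (Fin d → ℝ)) ≤ W :=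
        htop ▸ ((hUmono' hrd.le).trans hUdW)
      exact hW (top_le_iff.mp this)
  · -- strictly increasing chain: finrank (U r) ≥ r, so U d = ⊤
    push_neg at hstab
    have hlt : ∀ r < d, U r < U (r + 1) := by
      intro r hr
      exact lt_of_le_of_ne (hUmono r) fun h => hstab r hr h.ge
    have hrank : ∀ r ≤ d, r ≤ Module.finrank ℝ (U r) := by
      intro r hr
      induction r with
      | zero => omega
      | succ n ih =>
        have h1 := ih (le_of_lt (Nat.lt_of_succ_le hr))
        have h2 := Submodule.finrank_lt_finrank_of_lt (hlt n (Nat.lt_of_succ_le hr))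
        omega
    have : U d = ⊤ := by
      apply Submodule.eq_top_of_finrank_eq
      have h1 := hrank d le_rfl
      have h2 : Module.finrank ℝ (U d) ≤ Module.finrank ℝ (Fin d → ℝ) :=
        Submodule.finrank_le _
      rw [Module.finrank_fin_fun] at *
      omega
    exact hW (top_le_iff.mp (this ▸ hUdW))
end

section
/- Let f(x) ∈ ℝ[x] be a polynomial having at least one irrational coefficient in a degree ≥ 1 term. Then lim_{N→∞} (1/N) ∑_{n=1}^{N} e(f(n)) = 0, where e(t) = exp(2πit). -/
open Polynomial Filter Finset
set_option maxHeartbeats 1000000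
noncomputable def e (t : ℝ) : ℂ := Complex.exp (2 * Real.pi * Complex.I * t)

lemma e_eq (t : ℝ) : e t = Complex.exp ((2 * Real.pi * t : ℝ) * Complex.I) := by
  rw [e]; congr 1; push_cast; ring

lemma e_add (s t : ℝ) : e (s + t) = e s * e t := by
  simp only [e, ← Complex.exp_add]; congr 1; push_cast; ring

lemma norm_e (t : ℝ) : ‖e t‖ = 1 := by
  rw [e_eq, Complex.norm_exp_ofReal_mul_I]

lemma e_int (z : ℤ) : e z = 1 := by
  rw [e, Complex.exp_eq_one_iff]
  exact ⟨z, by push_cast; ring⟩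

lemma conj_e (t : ℝ) : (starRingEnd ℂ) (e t) = e (-t) := by
  rw [e_eq, e_eq, ← Complex.exp_conj, map_mul]
  simp [Complex.conj_I, map_ofNat]

lemma e_ne_one {t : ℝ} (ht : Irrational t) : e t ≠ 1 := by
  intro h
  rw [e, Complex.exp_eq_one_iff] at h
  rcases h with ⟨n, hn⟩
  have h2 : (2 * Real.pi * Complex.I : ℂ) ≠ 0 := by
    simp [Real.pi_ne_zero, Complex.I_ne_zero]
  have heq : (2 * Real.pi * Complex.I : ℂ) * t = (2 * Real.pi * Complex.I) * n := by
    rw [hn]; ring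
  have ht' : (t : ℂ) = n := mul_left_cancel₀ h2 heq
  have : t = (n : ℝ) := by exact_mod_cast ht'
  exact (ht.ne_int n) this

def W (u : ℕ → ℂ) : Prop :=
  Tendsto (fun N : ℕ => (N:ℂ)⁻¹ * ∑ n ∈ Finset.range N, u n) atTop (nhds 0)

lemma norm_avg (u : ℕ → ℂ) (N : ℕ) :
    ‖(N:ℂ)⁻¹ * ∑ n ∈ Finset.range N, u n‖ = ‖∑ n ∈ Finset.range N, u n‖ / N := by
  rw [norm_mul, norm_inv, Complex.norm_natCast, div_eq_inv_mul]

lemma W_iff (u : ℕ → ℂ) :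
    W u ↔ Tendsto (fun N : ℕ => ‖∑ n ∈ Finset.range N, u n‖ / N) atTop (nhds 0) := by
  constructor
  · intro h
    have := h.norm
    simpa only [norm_avg, norm_zero] using this
  · intro h
    exact squeeze_zero_norm (fun N => le_of_eq (norm_avg u N)) h

lemma W.const_mul {u : ℕ → ℂ} (h : W u) (c : ℂ) : W (fun n => c * u n) := by
  have := Filter.Tendsto.const_mul c h
  rw [mul_zero] at this
  refine this.congr (fun N => ?_)
  rw [← mul_assoc, mul_comm c, mul_assoc, Finset.mul_sum]

lemma W.congr_fun {u v : ℕ → ℂ} (h : W u) (huv : ∀ n, u n = v n) : W v := by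
  unfold W at h ⊢
  refine h.congr fun N => ?_
  congr 1
  exact Finset.sum_congr rfl fun n _ => huv n

lemma W_of_bounded_sum {u : ℕ → ℂ} (C : ℝ)
    (h : ∀ N, ‖∑ n ∈ Finset.range N, u n‖ ≤ C) : W u := by
  rw [W_iff]
  refine squeeze_zero_norm (a := fun N : ℕ => C / N) (fun N => ?_)
    (tendsto_const_div_atTop_nhds_zero_nat C)
  rw [Real.norm_eq_abs, abs_of_nonneg (by positivity)]
  exact div_le_div_of_nonneg_right (h N) (Nat.cast_nonneg N)

lemma W_linear {α : ℝ} (β : ℝ) (hα : Irrational α) :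
    W (fun n => e (α * n + β)) := by
  have hz : e α ≠ 1 := by
    intro h
    rw [e, Complex.exp_eq_one_iff] at h
    rcases h with ⟨n, hn⟩
    have h2 : (2 * Real.pi * Complex.I : ℂ) ≠ 0 := by
      simp [Real.pi_ne_zero, Complex.I_ne_zero]
    have heq : (2 * Real.pi * Complex.I : ℂ) * α = (2 * Real.pi * Complex.I) * n := by
      rw [hn]; ring
    have ht' : (α : ℂ) = n := mul_left_cancel₀ h2 heq
    exact hα.ne_int n (by exact_mod_cast ht')
  apply W_of_bounded_sum (1 * (2 / ‖e α - 1‖))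
  intro N
  have hsum : ∑ n ∈ Finset.range N, e (α * n + β)
      = e β * ∑ n ∈ Finset.range N, (e α) ^ n := by
    have key : ∀ n : ℕ, e (α * n + β) = e β * (e α) ^ n := by
      intro n
      induction n with
      | zero => simp [mul_comm]
      | succ k ih =>
        have h1 : α * (k+1 : ℕ) + β = α + (α * k + β) := by push_cast; ring
        rw [h1, e_add, ih, pow_succ]
        ring
    rw [Finset.mul_sum]
    exact Finset.sum_congr rfl fun n _ => key n
  rw [hsum, norm_mul, norm_e]
  gcongr
  rw [geom_sum_eq hz, norm_div]
  gcongr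
  calc ‖e α ^ N - 1‖ ≤ ‖e α ^ N‖ + ‖(1:ℂ)‖ := norm_sub_le _ _
    _ = 2 := by rw [norm_pow, norm_e]; norm_num

lemma norm_sum_le_card {v : ℕ → ℂ} (hv : ∀ n, ‖v n‖ ≤ 1) (s : Finset ℕ) :
    ‖∑ n ∈ s, v n‖ ≤ s.card := by
  calc ‖∑ n ∈ s, v n‖ ≤ ∑ n ∈ s, ‖v n‖ := norm_sum_le _ _
    _ ≤ ∑ _n ∈ s, 1 := Finset.sum_le_sum fun n _ => hv n
    _ = s.card := by simp

lemma sum_shift_bound {v : ℕ → ℂ} (hv : ∀ n, ‖v n‖ ≤ 1) (c N : ℕ) :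
    ‖∑ n ∈ Finset.range N, v (n + c) - ∑ n ∈ Finset.range N, v n‖ ≤ 2 * c := by
  have h1 : ∑ n ∈ Finset.range N, v (n + c) = ∑ n ∈ Finset.Ico c (N + c), v n := by
    rw [Finset.sum_Ico_eq_sum_range]
    simp only [Nat.add_sub_cancel]
    exact Finset.sum_congr rfl fun k _ => by rw [add_comm]
  rw [h1]
  rcases le_or_gt c N with hc | hc
  · have h2 : ∑ n ∈ Finset.Ico c N, v n + ∑ n ∈ Finset.Ico N (N+c), v n
        = ∑ n ∈ Finset.Ico c (N+c), v n :=
      Finset.sum_Ico_consecutive v hc (Nat.le_add_right N c)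
    have h3 : ∑ n ∈ Finset.Ico 0 c, v n + ∑ n ∈ Finset.Ico c N, v n
        = ∑ n ∈ Finset.Ico 0 N, v n :=
      Finset.sum_Ico_consecutive v (Nat.zero_le c) hc
    have h4 : ∑ n ∈ Finset.Ico c (N+c), v n - ∑ n ∈ Finset.range N, v n
        = ∑ n ∈ Finset.Ico N (N+c), v n - ∑ n ∈ Finset.Ico 0 c, v n := by
      rw [Finset.range_eq_Ico, ← h2, ← h3]; ring
    rw [h4]
    calc ‖∑ n ∈ Finset.Ico N (N+c), v n - ∑ n ∈ Finset.Ico 0 c, v n‖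
        ≤ ‖∑ n ∈ Finset.Ico N (N+c), v n‖ + ‖∑ n ∈ Finset.Ico 0 c, v n‖ := norm_sub_le _ _
      _ ≤ ((Finset.Ico N (N+c)).card : ℝ) + ((Finset.Ico 0 c).card : ℝ) := by
          gcongr <;> exact norm_sum_le_card hv _
      _ ≤ 2 * c := by
          rw [Nat.card_Ico, Nat.card_Ico]
          simp [two_mul]
  · calc ‖∑ n ∈ Finset.Ico c (N+c), v n - ∑ n ∈ Finset.range N, v n‖
        ≤ ‖∑ n ∈ Finset.Ico c (N+c), v n‖ + ‖∑ n ∈ Finset.range N, v n‖ := norm_sub_le _ _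
      _ ≤ ((Finset.Ico c (N+c)).card : ℝ) + ((Finset.range N).card : ℝ) := by
          gcongr <;> exact norm_sum_le_card hv _
      _ ≤ 2 * c := by
          rw [Nat.card_Ico, Finset.card_range, Nat.add_sub_cancel]
          have : (N:ℝ) ≤ c := by exact_mod_cast hc.le
          linarith

lemma vdc {u : ℕ → ℂ} (hu : ∀ n, ‖u n‖ ≤ 1)
    (hcor : ∀ k : ℕ, 1 ≤ k → W (fun n => u (n + k) * (starRingEnd ℂ) (u n))) :
    W u := by
  rw [W_iff, NormedAddCommGroup.tendsto_nhds_zero]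
  intro ε hε
  set H : ℕ := max 1 ⌈48 / ε ^ 2⌉₊ with hHdef
  have hH1 : 1 ≤ H := le_max_left _ _
  have hH1' : (1:ℝ) ≤ H := by exact_mod_cast hH1
  have hHpos : (0:ℝ) < H := by linarith
  have hHε : 48 ≤ ε ^ 2 * H := by
    have h1 : 48 / ε ^ 2 ≤ (⌈48 / ε ^ 2⌉₊ : ℝ) := Nat.le_ceil _
    have h2 : ((⌈48 / ε ^ 2⌉₊ : ℕ) : ℝ) ≤ H := by
      exact_mod_cast le_max_right 1 ⌈48 / ε ^ (2:ℕ)⌉₊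
    have h3 : 48 / ε ^ 2 ≤ (H:ℝ) := le_trans h1 h2
    calc (48:ℝ) = (48 / ε^2) * ε^2 := by field_simp
      _ ≤ (H:ℝ) * ε^2 := by gcongr
      _ = ε^2 * H := by ring
  set T : ℕ → ℕ → ℂ := fun k N => ∑ n ∈ Finset.range N, u (n + k) * (starRingEnd ℂ) (u n)
    with hTdef
  have hTk : ∀ k ∈ Finset.Ico 1 H, ∀ᶠ N : ℕ in atTop, ‖T k N‖ ≤ (N:ℝ) / H ^ 2 := by
    intro k hk
    obtain ⟨hk1, -⟩ := Finset.mem_Ico.1 hk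
    have hW := (W_iff _).1 (hcor k hk1)
    have hlt := Filter.Tendsto.eventually_lt_const
      (show (0:ℝ) < 1 / (H:ℝ)^2 by positivity) hW
    filter_upwards [hlt, eventually_ge_atTop 1] with N h1 h2
    have hNpos : (0:ℝ) < N := by exact_mod_cast h2
    calc ‖T k N‖ = ‖T k N‖ / N * N := by field_simp
      _ ≤ 1 / (H:ℝ)^2 * N := by
          exact mul_le_mul_of_nonneg_right h1.le hNpos.le
      _ = (N:ℝ) / H^2 := by ring
  have hTall : ∀ᶠ N : ℕ in atTop, ∀ k ∈ Finset.Ico 1 H, ‖T k N‖ ≤ (N:ℝ) / H ^ 2 :=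
    (Finset.eventually_all _).2 hTk
  have hN3ev : ∀ᶠ N : ℕ in atTop, (8:ℝ) * H ≤ ε * N := by
    have ht : Tendsto (fun N : ℕ => ε * N) atTop atTop :=
      Tendsto.const_mul_atTop hε tendsto_natCast_atTop_atTop
    exact ht.eventually_ge_atTop _
  filter_upwards [hTall, eventually_ge_atTop (2 * H^3), hN3ev, eventually_ge_atTop 1]
    with N hT hN2 hN3 hN1
  have hNpos : (0:ℝ) < N := by exact_mod_cast hN1
  have hN2' : (2:ℝ) * (H:ℝ)^3 ≤ N := by exact_mod_cast hN2
  set S : ℂ := ∑ n ∈ Finset.range N, u n with hSdef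
  set b : ℕ → ℂ := fun n => ∑ h ∈ Finset.range H, u (n + h) with hbdef
  set B : ℂ := ∑ n ∈ Finset.range N, b n with hBdef
  set Q : ℝ := ∑ n ∈ Finset.range N, ‖b n‖^2 with hQdef
  -- Step A
  have hA : (H:ℝ) * ‖S‖ ≤ ‖B‖ + 2 * H^2 := by
    have hswap : B = ∑ h ∈ Finset.range H, ∑ n ∈ Finset.range N, u (n + h) :=
      Finset.sum_comm
    have hHS : (H:ℂ) * S = ∑ _h ∈ Finset.range H, S := by
      rw [Finset.sum_const, Finset.card_range, nsmul_eq_mul]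
    have hsplit : (H:ℂ) * S = B + ((H:ℂ) * S - B) := by ring
    calc (H:ℝ) * ‖S‖ = ‖(H:ℂ) * S‖ := by rw [norm_mul, Complex.norm_natCast]
      _ ≤ ‖B‖ + ‖(H:ℂ) * S - B‖ := by
          have hn := norm_add_le B ((H:ℂ) * S - B)
          rwa [← hsplit] at hn
      _ ≤ ‖B‖ + 2 * H^2 := by
          gcongr
          have hdiff : (H:ℂ) * S - B
              = ∑ h ∈ Finset.range H, (S - ∑ n ∈ Finset.range N, u (n + h)) := by
            rw [Finset.sum_sub_distrib, ← hHS, ← hswap]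
          rw [hdiff]
          calc ‖∑ h ∈ Finset.range H, (S - ∑ n ∈ Finset.range N, u (n + h))‖
              ≤ ∑ h ∈ Finset.range H, ‖S - ∑ n ∈ Finset.range N, u (n + h)‖ :=
                norm_sum_le _ _
            _ ≤ ∑ _h ∈ Finset.range H, (2 * (H:ℝ)) := by
                refine Finset.sum_le_sum fun h hh => ?_
                have hb := sum_shift_bound hu h N
                have heq : ‖S - ∑ n ∈ Finset.range N, u (n + h)‖
                    = ‖∑ n ∈ Finset.range N, u (n + h) - S‖ := by
                  rw [← norm_neg]; congr 1; ring
                rw [heq]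
                refine le_trans hb ?_
                have : (h:ℝ) ≤ H := by
                  exact_mod_cast (Finset.mem_range.1 hh).le
                linarith
            _ = (H:ℝ) * (2 * H) := by
                rw [Finset.sum_const, Finset.card_range, nsmul_eq_mul]
            _ = 2 * H^2 := by ring
  -- Step D : off-diagonal pair bound
  have key : ∀ h h' : ℕ, h < H → h' < h →
      ‖∑ n ∈ Finset.range N, u (n + h) * (starRingEnd ℂ) (u (n + h'))‖
        ≤ (N:ℝ) / H^2 + 2 * H := by
    intro h h' hhH hh'
    set k : ℕ := h - h' with hkdef
    have hk1 : 1 ≤ k := by omega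
    have hkH : k < H := by omega
    set v : ℕ → ℂ := fun m => u (m + k) * (starRingEnd ℂ) (u m) with hvdef
    have hv : ∀ m, ‖v m‖ ≤ 1 := by
      intro m
      rw [hvdef]
      calc ‖u (m + k) * (starRingEnd ℂ) (u m)‖ = ‖u (m+k)‖ * ‖u m‖ := by
            rw [norm_mul, RCLike.norm_conj]
        _ ≤ 1 * 1 := by gcongr <;> [exact hu _; exact hu _]
        _ = 1 := by norm_num
    have hDv : ∑ n ∈ Finset.range N, u (n + h) * (starRingEnd ℂ) (u (n + h'))
        = ∑ n ∈ Finset.range N, v (n + h') := by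
      refine Finset.sum_congr rfl fun n _ => ?_
      rw [hvdef]
      congr 2
      omega
    rw [hDv]
    have hsb := sum_shift_bound hv h' N
    have hTkN : ‖T k N‖ ≤ (N:ℝ) / H^2 :=
      hT k (Finset.mem_Ico.2 ⟨hk1, hkH⟩)
    have hTeq : T k N = ∑ n ∈ Finset.range N, v n := rfl
    calc ‖∑ n ∈ Finset.range N, v (n + h')‖
        ≤ ‖∑ n ∈ Finset.range N, v n‖
          + ‖∑ n ∈ Finset.range N, v (n + h') - ∑ n ∈ Finset.range N, v n‖ := by
          have hn := norm_add_le (∑ n ∈ Finset.range N, v n)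
            (∑ n ∈ Finset.range N, v (n + h') - ∑ n ∈ Finset.range N, v n)
          have heq : ∑ n ∈ Finset.range N, v n
              + (∑ n ∈ Finset.range N, v (n + h') - ∑ n ∈ Finset.range N, v n)
              = ∑ n ∈ Finset.range N, v (n + h') := by ring
          rwa [heq] at hn
      _ ≤ (N:ℝ) / H^2 + 2 * h' := by
          refine add_le_add ?_ hsb
          rw [← hTeq]; exact hTkN
      _ ≤ (N:ℝ) / H^2 + 2 * H := by
          have : (h':ℝ) ≤ H := by
            have : h' < H := lt_trans hh' hhH
            exact_mod_cast this.le
          linarith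
  have hD : ∀ h ∈ Finset.range H, ∀ h' ∈ Finset.range H, h ≠ h' →
      ‖∑ n ∈ Finset.range N, u (n + h) * (starRingEnd ℂ) (u (n + h'))‖
        ≤ (N:ℝ) / H^2 + 2 * H := by
    intro h hh h' hh' hne
    rcases lt_or_gt_of_ne hne with hlt | hgt
    · have hconj : ∑ n ∈ Finset.range N, u (n + h) * (starRingEnd ℂ) (u (n + h'))
          = (starRingEnd ℂ) (∑ n ∈ Finset.range N, u (n + h') * (starRingEnd ℂ) (u (n + h))) := by
        rw [map_sum]
        refine Finset.sum_congr rfl fun n _ => ?_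
        rw [map_mul, Complex.conj_conj]
        ring
      rw [hconj, RCLike.norm_conj]
      exact key h' h (Finset.mem_range.1 hh') hlt
    · exact key h h' (Finset.mem_range.1 hh) hgt
  -- Step C : Q ≤ double sum of norms
  have hC : Q ≤ ∑ h ∈ Finset.range H, ∑ h' ∈ Finset.range H,
      ‖∑ n ∈ Finset.range N, u (n + h) * (starRingEnd ℂ) (u (n + h'))‖ := by
    have hb2 : ∀ n, ‖b n‖^2 = (b n * (starRingEnd ℂ) (b n)).re := by
      intro n
      rw [Complex.mul_conj, Complex.normSq_eq_norm_sq, Complex.ofReal_re]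
    have hQre : Q = (∑ n ∈ Finset.range N, b n * (starRingEnd ℂ) (b n)).re := by
      rw [hQdef, Complex.re_sum]
      exact Finset.sum_congr rfl fun n _ => hb2 n
    have hexp : ∀ n, b n * (starRingEnd ℂ) (b n)
        = ∑ h ∈ Finset.range H, ∑ h' ∈ Finset.range H,
            u (n + h) * (starRingEnd ℂ) (u (n + h')) := by
      intro n
      rw [hbdef]
      simp only [map_sum]
      rw [Finset.sum_mul_sum]
    have hswap2 : ∑ n ∈ Finset.range N, b n * (starRingEnd ℂ) (b n)
        = ∑ h ∈ Finset.range H, ∑ h' ∈ Finset.range H,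
            ∑ n ∈ Finset.range N, u (n + h) * (starRingEnd ℂ) (u (n + h')) := by
      rw [Finset.sum_congr rfl fun n _ => hexp n]
      rw [Finset.sum_comm]
      exact Finset.sum_congr rfl fun h _ => Finset.sum_comm
    rw [hQre, hswap2]
    calc (∑ h ∈ Finset.range H, ∑ h' ∈ Finset.range H,
            ∑ n ∈ Finset.range N, u (n + h) * (starRingEnd ℂ) (u (n + h'))).re
        ≤ ‖∑ h ∈ Finset.range H, ∑ h' ∈ Finset.range H,
            ∑ n ∈ Finset.range N, u (n + h) * (starRingEnd ℂ) (u (n + h'))‖ := by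
          exact Complex.re_le_norm _
      _ ≤ ∑ h ∈ Finset.range H, ‖∑ h' ∈ Finset.range H,
            ∑ n ∈ Finset.range N, u (n + h) * (starRingEnd ℂ) (u (n + h'))‖ :=
          norm_sum_le _ _
      _ ≤ ∑ h ∈ Finset.range H, ∑ h' ∈ Finset.range H,
            ‖∑ n ∈ Finset.range N, u (n + h) * (starRingEnd ℂ) (u (n + h'))‖ :=
          Finset.sum_le_sum fun h _ => norm_sum_le _ _
  -- bound double sum
  have hQbound : Q ≤ (H:ℝ) * (((N:ℝ) / H^2 + 2 * H) * H + N) := by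
    refine le_trans hC ?_
    have hinner : ∀ h ∈ Finset.range H,
        ∑ h' ∈ Finset.range H,
          ‖∑ n ∈ Finset.range N, u (n + h) * (starRingEnd ℂ) (u (n + h'))‖
        ≤ ((N:ℝ) / H^2 + 2 * H) * H + N := by
      intro h hh
      rw [Finset.sum_eq_sum_sdiff_singleton_add hh]
      gcongr
      · calc ∑ h' ∈ Finset.range H \ {h},
            ‖∑ n ∈ Finset.range N, u (n + h) * (starRingEnd ℂ) (u (n + h'))‖
            ≤ (Finset.range H \ {h}).card • ((N:ℝ) / H^2 + 2 * H) := by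
              refine Finset.sum_le_card_nsmul _ _ _ fun h' hh' => ?_
              obtain ⟨hh'mem, hh'ne⟩ := Finset.mem_sdiff.1 hh'
              exact hD h hh h' hh'mem
                (fun hEq => hh'ne (Finset.mem_singleton.2 hEq.symm))
          _ ≤ ((N:ℝ) / H^2 + 2 * H) * H := by
              rw [nsmul_eq_mul]
              have hcard : (((Finset.range H \ {h}).card : ℕ) : ℝ) ≤ H := by
                have hc : (Finset.range H \ {h}).card ≤ H :=
                  le_trans (Finset.card_le_card Finset.sdiff_subset)
                    (le_of_eq (Finset.card_range H))
                exact_mod_cast hc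
              have hpos : (0:ℝ) ≤ (N:ℝ) / H^2 + 2 * H := by positivity
              calc (((Finset.range H \ {h}).card : ℕ) : ℝ) * ((N:ℝ) / H^2 + 2 * H)
                  ≤ (H:ℝ) * ((N:ℝ) / H^2 + 2 * H) :=
                    mul_le_mul_of_nonneg_right hcard hpos
                _ = ((N:ℝ) / H^2 + 2 * H) * H := mul_comm _ _
      · have : ∀ n, ‖u (n + h) * (starRingEnd ℂ) (u (n + h))‖ ≤ 1 := by
          intro n
          rw [norm_mul, RCLike.norm_conj]
          calc ‖u (n+h)‖ * ‖u (n+h)‖ ≤ 1 * 1 := by gcongr <;> [exact hu _; exact hu _]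
            _ = 1 := by norm_num
        calc ‖∑ n ∈ Finset.range N, u (n + h) * (starRingEnd ℂ) (u (n + h))‖
            ≤ ((Finset.range N).card : ℝ) := norm_sum_le_card this _
          _ = N := by rw [Finset.card_range]
    calc ∑ h ∈ Finset.range H, ∑ h' ∈ Finset.range H,
          ‖∑ n ∈ Finset.range N, u (n + h) * (starRingEnd ℂ) (u (n + h'))‖
        ≤ (Finset.range H).card • (((N:ℝ) / H^2 + 2 * H) * H + N) :=
          Finset.sum_le_card_nsmul _ _ _ hinner
      _ = (H:ℝ) * (((N:ℝ) / H^2 + 2 * H) * H + N) := by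
          rw [Finset.card_range, nsmul_eq_mul]
  have hQ3 : Q ≤ 3 * H * N := by
    have hexp2 : (H:ℝ) * (((N:ℝ) / H^2 + 2 * H) * H + N) = N + 2*(H:ℝ)^3 + H * N := by
      field_simp
    rw [hexp2] at hQbound
    nlinarith [hQbound, hN2', hH1', hNpos.le]
  -- Step B : Cauchy-Schwarz
  have hB2 : ‖B‖^2 ≤ (N:ℝ) * Q := by
    have h1 : ‖B‖ ≤ ∑ n ∈ Finset.range N, ‖b n‖ := norm_sum_le _ _
    have h2 : (∑ n ∈ Finset.range N, ‖b n‖)^2 ≤ (N:ℝ) * Q := by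
      have := Finset.sum_mul_sq_le_sq_mul_sq (Finset.range N)
        (fun _ => (1:ℝ)) (fun n => ‖b n‖)
      simpa [Finset.card_range, hQdef] using this
    calc ‖B‖^2 ≤ (∑ n ∈ Finset.range N, ‖b n‖)^2 :=
          pow_le_pow_left₀ (norm_nonneg _) h1 2
      _ ≤ (N:ℝ) * Q := h2
  have hB3 : ‖B‖^2 ≤ 3 * H * (N:ℝ)^2 := by
    calc ‖B‖^2 ≤ (N:ℝ) * Q := hB2
      _ ≤ (N:ℝ) * (3 * H * N) := by gcongr
      _ = 3 * H * (N:ℝ)^2 := by ring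
  have hBle : ‖B‖ ≤ ε/4 * ((H:ℝ) * N) := by
    rw [← pow_le_pow_iff_left₀ (norm_nonneg B) (by positivity) two_ne_zero]
    calc ‖B‖^2 ≤ 3 * H * (N:ℝ)^2 := hB3
      _ ≤ (ε/4 * ((H:ℝ) * N))^2 := by
          nlinarith [mul_le_mul_of_nonneg_right hHε
            (show (0:ℝ) ≤ (H:ℝ) * (N:ℝ)^2 / 16 by positivity)]
  -- conclude
  have hfin : ‖S‖ ≤ ε/2 * N := by
    have h2H2 : 2 * (H:ℝ)^2 ≤ ε/4 * ((H:ℝ) * N) := by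
      nlinarith [mul_le_mul_of_nonneg_right hN3 (show (0:ℝ) ≤ (H:ℝ)/4 by positivity)]
    have : (H:ℝ) * ‖S‖ ≤ (H:ℝ) * (ε/2 * N) := by
      calc (H:ℝ) * ‖S‖ ≤ ‖B‖ + 2 * H^2 := hA
        _ ≤ ε/4 * ((H:ℝ) * N) + ε/4 * ((H:ℝ) * N) := by gcongr
        _ = (H:ℝ) * (ε/2 * N) := by ring
    exact le_of_mul_le_mul_left this hHpos
  rw [Real.norm_eq_abs, abs_of_nonneg (by positivity)]
  rw [div_lt_iff₀ hNpos]
  calc ‖S‖ ≤ ε/2 * N := hfin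
    _ < ε * N := by nlinarith

lemma W_poly_lead : ∀ d : ℕ, ∀ f : Polynomial ℝ, f.natDegree = d → 1 ≤ d →
    Irrational f.leadingCoeff → W (fun n => e (f.eval (n:ℝ))) := by
  intro d
  induction d with
  | zero => intro f _ h; omega
  | succ d IH =>
    intro f hdeg _ hirr
    rcases Nat.eq_zero_or_pos d with rfl | hdpos
    · -- degree 1 : linear case
      have heval : ∀ n : ℕ, f.eval (n:ℝ) = f.coeff 1 * n + f.coeff 0 := by
        intro n
        rw [Polynomial.eval_eq_sum_range, hdeg]
        rw [Finset.sum_range_succ, Finset.sum_range_succ, Finset.sum_range_zero]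
        ring
      have hlc : f.leadingCoeff = f.coeff 1 := by
        rw [Polynomial.leadingCoeff, hdeg]
      rw [hlc] at hirr
      exact (W_linear (f.coeff 0) hirr).congr_fun fun n => by rw [heval n]
    · -- inductive step via van der Corput
      apply vdc (fun n => le_of_eq (norm_e _))
      intro k hk1
      set a : ℝ := f.coeff (d+1) with hadef
      have ha : Irrational a := by
        rwa [Polynomial.leadingCoeff, hdeg] at hirr
      set g : Polynomial ℝ := Polynomial.taylor (k:ℝ) f - f with hg
      have hhi : ∀ j, d + 1 ≤ j → g.coeff j = 0 := by
        intro j hj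
        rcases eq_or_lt_of_le hj with rfl | hj'
        · have hdegp : (Polynomial.hasseDeriv (d+1) f).natDegree ≤ 0 := by
            have := Polynomial.natDegree_hasseDeriv_le f (d+1)
            rw [hdeg] at this
            omega
          have hp : Polynomial.hasseDeriv (d+1) f = Polynomial.C a := by
            rw [Polynomial.eq_C_of_natDegree_le_zero hdegp]
            congr 1
            rw [Polynomial.hasseDeriv_coeff]
            simp [hadef]
          rw [hg, Polynomial.coeff_sub, Polynomial.taylor_coeff, hp,
            Polynomial.eval_C, hadef, sub_self]
        · rw [hg, Polynomial.coeff_sub,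
            Polynomial.coeff_eq_zero_of_natDegree_lt
              (by rw [Polynomial.natDegree_taylor, hdeg]; omega),
            Polynomial.coeff_eq_zero_of_natDegree_lt (by rw [hdeg]; omega),
            sub_self]
      have hq1 : (Polynomial.hasseDeriv d f).natDegree ≤ 1 := by
        have := Polynomial.natDegree_hasseDeriv_le f d
        rw [hdeg] at this
        omega
      have heval_q : Polynomial.eval (k:ℝ) (Polynomial.hasseDeriv d f)
          = f.coeff d + ((d:ℝ)+1) * k * a := by
        conv_lhs => rw [Polynomial.eq_X_add_C_of_natDegree_le_one hq1]
        rw [Polynomial.eval_add, Polynomial.eval_mul, Polynomial.eval_C,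
          Polynomial.eval_X, Polynomial.eval_C,
          Polynomial.hasseDeriv_coeff, Polynomial.hasseDeriv_coeff]
        have h1 : (1 + d).choose d = d + 1 := by
          rw [add_comm]
          exact Nat.choose_succ_self_right d
        have h2 : (0 + d).choose d = 1 := by simp
        rw [h1, h2]
        have h3 : f.coeff (1 + d) = a := by rw [hadef, add_comm]
        rw [h3]
        push_cast
        ring
      have hcd : g.coeff d = ((d:ℝ)+1) * k * a := by
        rw [hg, Polynomial.coeff_sub, Polynomial.taylor_coeff, heval_q]
        ring
      have hirr_gd : Irrational (g.coeff d) := by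
        rw [hcd]
        have hcast : ((d:ℝ)+1) * (k:ℝ) * a = ((((d+1)*k : ℕ) : ℚ) : ℝ) * a := by
          push_cast
          ring
        rw [hcast]
        refine Irrational.ratCast_mul ha ?_
        have : (d+1) * k ≠ 0 := by positivity
        exact_mod_cast this
      have hgne : g.coeff d ≠ 0 := hirr_gd.ne_zero ∘ fun h0 => by rw [h0]
      have hgdeg : g.natDegree = d := by
        refine le_antisymm ?_ (Polynomial.le_natDegree_of_ne_zero ?_)
        · exact Polynomial.natDegree_le_iff_coeff_eq_zero.2
            fun j hj => hhi j (by omega)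
        · intro h0
          rw [h0] at hirr_gd
          exact (Rat.not_irrational 0) (by simpa using hirr_gd)
      have hlcg : Irrational g.leadingCoeff := by
        rwa [Polynomial.leadingCoeff, hgdeg]
      refine (IH g hgdeg hdpos hlcg).congr_fun fun n => ?_
      have hge : g.eval (n:ℝ) = f.eval ((n:ℝ) + k) - f.eval (n:ℝ) := by
        rw [hg, Polynomial.eval_sub, Polynomial.taylor_eval]
      rw [hge, sub_eq_add_neg, e_add, conj_e]
      congr 2
      push_cast
      ring

lemma sum_range_mul_block (u : ℕ → ℂ) (q : ℕ) :
    ∀ M : ℕ, ∑ n ∈ Finset.range (q * M), u n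
      = ∑ s ∈ Finset.range q, ∑ m ∈ Finset.range M, u (q * m + s) := by
  intro M
  induction M with
  | zero => simp
  | succ M ih =>
    have hsplit : ∑ n ∈ Finset.range (q * M + q), u n
        = ∑ n ∈ Finset.range (q * M), u n + ∑ i ∈ Finset.range q, u (q * M + i) := by
      have h1 : ∑ n ∈ Finset.Ico 0 (q*M), u n + ∑ n ∈ Finset.Ico (q*M) (q*M+q), u n
          = ∑ n ∈ Finset.Ico 0 (q*M+q), u n :=
        Finset.sum_Ico_consecutive u (Nat.zero_le _) (Nat.le_add_right _ _)
      have h2 : ∑ n ∈ Finset.Ico (q*M) (q*M+q), u n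
          = ∑ i ∈ Finset.range q, u (q*M+i) := by
        rw [Finset.sum_Ico_eq_sum_range]
        have hc : q * M + q - q * M = q := by omega
        rw [hc]
      rw [Finset.range_eq_Ico, ← h1, h2, ← Finset.range_eq_Ico]
    have hqM : q * (M + 1) = q * M + q := by ring
    rw [hqM, hsplit, ih]
    rw [← Finset.sum_add_distrib]
    refine Finset.sum_congr rfl fun s _ => ?_
    rw [Finset.sum_range_succ]

lemma tendsto_nat_div_atTop {q : ℕ} (hq : 1 ≤ q) :
    Tendsto (fun N : ℕ => N / q) atTop atTop := by
  refine tendsto_atTop_atTop.2 fun b => ⟨q * b, fun N hN => ?_⟩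
  rw [Nat.le_div_iff_mul_le (by omega)]
  exact le_trans (le_of_eq (mul_comm b q)) hN

lemma W_of_progressions {u : ℕ → ℂ} (hu : ∀ n, ‖u n‖ ≤ 1) (q : ℕ) (hq : 1 ≤ q)
    (h : ∀ s, s < q → W (fun m => u (q * m + s))) : W u := by
  rw [W_iff]
  have hgoal : Tendsto (fun N : ℕ => (q:ℝ)/N
      + ∑ s ∈ Finset.range q,
          ‖∑ m ∈ Finset.range (N / q), u (q * m + s)‖ / (N / q : ℕ)) atTop (nhds 0) := by
    have h1 : Tendsto (fun N : ℕ => (q:ℝ)/N) atTop (nhds 0) :=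
      tendsto_const_div_atTop_nhds_zero_nat (q:ℝ)
    have h2 : Tendsto (fun N : ℕ => ∑ s ∈ Finset.range q,
        ‖∑ m ∈ Finset.range (N / q), u (q * m + s)‖ / (N / q : ℕ)) atTop (nhds 0) := by
      have : (0:ℝ) = ∑ _s ∈ Finset.range q, (0:ℝ) := by simp
      rw [this]
      refine tendsto_finset_sum _ fun s hs => ?_
      have hWs := (W_iff _).1 (h s (Finset.mem_range.1 hs))
      exact hWs.comp (tendsto_nat_div_atTop hq)
    have := h1.add h2
    rwa [add_zero] at this
  refine squeeze_zero_norm' ?_ hgoal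
  filter_upwards [eventually_ge_atTop q] with N hN
  set M : ℕ := N / q with hM
  have hM1 : 1 ≤ M := by
    rw [hM, Nat.le_div_iff_mul_le (by omega)]
    omega
  have hMN : M ≤ N := Nat.div_le_self N q
  have hNsplit : N = q * M + N % q := by
    rw [hM]
    exact (Nat.div_add_mod N q).symm
  have hS : ∑ n ∈ Finset.range N, u n
      = ∑ s ∈ Finset.range q, (∑ m ∈ Finset.range M, u (q * m + s))
        + ∑ i ∈ Finset.range (N % q), u (q * M + i) := by
    conv_lhs => rw [hNsplit]
    rw [← sum_range_mul_block u q M]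
    have h1 : ∑ n ∈ Finset.Ico 0 (q*M), u n + ∑ n ∈ Finset.Ico (q*M) (q*M+N%q), u n
        = ∑ n ∈ Finset.Ico 0 (q*M+N%q), u n :=
      Finset.sum_Ico_consecutive u (Nat.zero_le _) (Nat.le_add_right _ _)
    have h2 : ∑ n ∈ Finset.Ico (q*M) (q*M+N%q), u n
        = ∑ i ∈ Finset.range (N%q), u (q*M+i) := by
      rw [Finset.sum_Ico_eq_sum_range]
      have hc : q * M + N % q - q * M = N % q := by omega
      rw [hc]
    rw [Finset.range_eq_Ico, ← h1, h2, ← Finset.range_eq_Ico]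
  have hnorm : ‖∑ n ∈ Finset.range N, u n‖
      ≤ ∑ s ∈ Finset.range q, ‖∑ m ∈ Finset.range M, u (q * m + s)‖ + q := by
    rw [hS]
    calc ‖∑ s ∈ Finset.range q, (∑ m ∈ Finset.range M, u (q * m + s))
          + ∑ i ∈ Finset.range (N % q), u (q * M + i)‖
        ≤ ‖∑ s ∈ Finset.range q, (∑ m ∈ Finset.range M, u (q * m + s))‖
          + ‖∑ i ∈ Finset.range (N % q), u (q * M + i)‖ := norm_add_le _ _
      _ ≤ ∑ s ∈ Finset.range q, ‖∑ m ∈ Finset.range M, u (q * m + s)‖ + q := by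
          gcongr
          · exact norm_sum_le _ _
          · calc ‖∑ i ∈ Finset.range (N % q), u (q * M + i)‖
                ≤ ((Finset.range (N % q)).card : ℝ) :=
                  norm_sum_le_card (fun n => hu _) _
              _ = ((N % q : ℕ) : ℝ) := by rw [Finset.card_range]
              _ ≤ q := by
                  have := Nat.mod_lt N (show 0 < q by omega)
                  exact_mod_cast this.le
  have hNpos : (0:ℝ) < N := by
    have : 1 ≤ N := le_trans hq hN
    exact_mod_cast this
  have hMpos : (0:ℝ) < M := by exact_mod_cast hM1
  rw [Real.norm_eq_abs, abs_of_nonneg (by positivity)]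
  rw [div_le_iff₀ hNpos]
  have hterm : ∀ s ∈ Finset.range q, ‖∑ m ∈ Finset.range M, u (q * m + s)‖
      ≤ ‖∑ m ∈ Finset.range M, u (q * m + s)‖ / (M:ℝ) * N := by
    intro s _
    have hmn : (M:ℝ) ≤ N := by exact_mod_cast hMN
    have h1 : ‖∑ m ∈ Finset.range M, u (q * m + s)‖ / (M:ℝ) * M
        ≤ ‖∑ m ∈ Finset.range M, u (q * m + s)‖ / (M:ℝ) * N :=
      mul_le_mul_of_nonneg_left hmn (by positivity)
    rwa [div_mul_cancel₀ _ hMpos.ne'] at h1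
  calc ‖∑ n ∈ Finset.range N, u n‖
      ≤ ∑ s ∈ Finset.range q, ‖∑ m ∈ Finset.range M, u (q * m + s)‖ + q := hnorm
    _ ≤ (∑ s ∈ Finset.range q, ‖∑ m ∈ Finset.range M, u (q * m + s)‖ / (M:ℝ) * N)
        + q := by
        exact add_le_add_left (Finset.sum_le_sum hterm) _
    _ = ((q:ℝ)/N + ∑ s ∈ Finset.range q,
          ‖∑ m ∈ Finset.range M, u (q * m + s)‖ / (M:ℝ)) * N := by
        rw [add_mul, div_mul_cancel₀ _ hNpos.ne', Finset.sum_mul, add_comm]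

lemma exists_int_sum (s : Finset ℕ) (F : ℕ → ℝ) (h : ∀ j ∈ s, ∃ z : ℤ, F j = z) :
    ∃ z : ℤ, ∑ j ∈ s, F j = z := by
  classical
  induction s using Finset.induction with
  | empty => exact ⟨0, by simp⟩
  | @insert a t ha ih =>
    obtain ⟨z1, hz1⟩ := h a (Finset.mem_insert_self a t)
    obtain ⟨z2, hz2⟩ := ih fun j hj => h j (Finset.mem_insert_of_mem hj)
    refine ⟨z1 + z2, ?_⟩
    rw [Finset.sum_insert ha, hz1, hz2]
    push_cast
    ring

lemma W_poly (f : Polynomial ℝ) (hf : ∃ n : ℕ, 1 ≤ n ∧ Irrational (f.coeff n)) :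
    W (fun n => e (f.eval (n:ℝ))) := by
  classical
  obtain ⟨n0, hn01, hn0irr⟩ := hf
  set D := f.natDegree with hD
  have hn0D : n0 ≤ D := Polynomial.le_natDegree_of_ne_zero hn0irr.ne_zero
  set S : Finset ℕ := (Finset.range (D+1)).filter (fun n => Irrational (f.coeff n))
    with hS
  have hn0S : n0 ∈ S := Finset.mem_filter.2 ⟨Finset.mem_range.2 (by omega), hn0irr⟩
  have hSne : S.Nonempty := ⟨n0, hn0S⟩
  set k := S.max' hSne with hk
  have hkS : k ∈ S := S.max'_mem hSne
  have hkirr : Irrational (f.coeff k) := (Finset.mem_filter.1 hkS).2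
  have hk1 : 1 ≤ k := le_trans hn01 (S.le_max' n0 hn0S)
  have hkD : k ≤ D := by
    have := (Finset.mem_filter.1 hkS).1
    exact Nat.lt_succ_iff.1 (Finset.mem_range.1 this)
  have hrat : ∀ j, k < j → ¬ Irrational (f.coeff j) := by
    intro j hj hirrj
    have hjD : j ≤ D := Polynomial.le_natDegree_of_ne_zero hirrj.ne_zero
    have hjS : j ∈ S := Finset.mem_filter.2 ⟨Finset.mem_range.2 (by omega), hirrj⟩
    exact absurd (S.le_max' j hjS) (not_le.2 hj)
  have hratex : ∀ j, ∃ qq : ℚ, k < j → f.coeff j = (qq : ℝ) := by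
    intro j
    by_cases hj : k < j
    · have h := hrat j hj
      rw [Irrational, Set.not_notMem] at h
      obtain ⟨qq, hqq⟩ := h
      exact ⟨qq, fun _ => hqq.symm⟩
    · exact ⟨0, fun h' => absurd h' hj⟩
  choose c hcc using hratex
  set r : Polynomial ℝ := ∑ j ∈ Finset.Ioc k D, Polynomial.C ((c j : ℝ)) * Polynomial.X ^ j
    with hr
  set g : Polynomial ℝ := f - r with hgdef
  have hrc : ∀ i, r.coeff i = if i ∈ Finset.Ioc k D then (c i : ℝ) else 0 := by
    intro i
    rw [hr, Polynomial.finset_sum_coeff]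
    simp [Polynomial.coeff_C_mul, Polynomial.coeff_X_pow]
  have hgc_le : ∀ i, i ≤ k → g.coeff i = f.coeff i := by
    intro i hi
    rw [hgdef, Polynomial.coeff_sub, hrc,
      if_neg (by rw [Finset.mem_Ioc]; omega), sub_zero]
  have hgc_gt : ∀ i, k < i → g.coeff i = 0 := by
    intro i hi
    rw [hgdef, Polynomial.coeff_sub, hrc]
    by_cases hiD : i ≤ D
    · rw [if_pos (Finset.mem_Ioc.2 ⟨hi, hiD⟩), hcc i hi, sub_self]
    · rw [if_neg (by rw [Finset.mem_Ioc]; omega), sub_zero]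
      exact Polynomial.coeff_eq_zero_of_natDegree_lt (by omega)
  have hgk : g.coeff k = f.coeff k := hgc_le k le_rfl
  have hgne : g.coeff k ≠ 0 := by rw [hgk]; exact hkirr.ne_zero
  have hgdeg : g.natDegree = k :=
    le_antisymm (Polynomial.natDegree_le_iff_coeff_eq_zero.2 fun j hj => hgc_gt j hj)
      (Polynomial.le_natDegree_of_ne_zero hgne)
  have hglc : Irrational g.leadingCoeff := by
    rw [Polynomial.leadingCoeff, hgdeg, hgk]
    exact hkirr
  set q : ℕ := ∏ j ∈ Finset.Ioc k D, (c j).den with hq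
  have hq1 : 1 ≤ q := Finset.one_le_prod' fun j _ => (c j).den_pos
  refine W_of_progressions (fun n => le_of_eq (norm_e _)) q hq1 ?_
  intro s hs
  have hqR : ((q:ℝ)) ≠ 0 := by
    have : (0:ℝ) < q := by exact_mod_cast hq1
    linarith
  set L : Polynomial ℝ := Polynomial.C (q:ℝ) * Polynomial.X + Polynomial.C (s:ℝ) with hL
  have hLdeg : L.natDegree = 1 := Polynomial.natDegree_linear hqR
  set G : Polynomial ℝ := g.comp L with hG
  have hGdeg : G.natDegree = k := by
    rw [hG, Polynomial.natDegree_comp, hLdeg, mul_one, hgdeg]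
  have hGlc : Irrational G.leadingCoeff := by
    rw [hG, Polynomial.leadingCoeff_comp (by rw [hLdeg]; omega), hL,
      Polynomial.leadingCoeff_linear hqR, hgdeg]
    have hcast : g.leadingCoeff * (q:ℝ)^k = (((q^k : ℕ) : ℚ) : ℝ) * g.leadingCoeff := by
      push_cast
      ring
    rw [hcast]
    refine Irrational.ratCast_mul hglc ?_
    have : q^k ≠ 0 := by positivity
    exact_mod_cast this
  have hWG := W_poly_lead k G hGdeg hk1 hGlc
  have hGeval : ∀ m : ℕ, G.eval (m:ℝ) = g.eval (((q*m+s : ℕ) : ℝ)) := by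
    intro m
    rw [hG, Polynomial.eval_comp, hL]
    congr 1
    simp only [Polynomial.eval_add, Polynomial.eval_mul, Polynomial.eval_C,
      Polynomial.eval_X]
    push_cast
    ring
  have hre : ∀ x : ℝ, r.eval x = ∑ j ∈ Finset.Ioc k D, (c j:ℝ) * x^j := by
    intro x
    rw [hr, Polynomial.eval_finset_sum]
    simp
  have hrint : ∀ m : ℕ, ∃ z : ℤ,
      r.eval (((q*m+s : ℕ)):ℝ) - r.eval ((s:ℝ)) = z := by
    intro m
    have hsum : r.eval (((q*m+s : ℕ)):ℝ) - r.eval ((s:ℝ))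
        = ∑ j ∈ Finset.Ioc k D, (c j:ℝ) * (((q*m+s:ℕ):ℝ)^j - (s:ℝ)^j) := by
      rw [hre, hre, ← Finset.sum_sub_distrib]
      refine Finset.sum_congr rfl fun j _ => ?_
      ring
    rw [hsum]
    refine exists_int_sum _ _ fun j hj => ?_
    set n : ℤ := ((q*m+s:ℕ):ℤ)^j - ((s:ℕ):ℤ)^j with hn
    have hdvd : ((c j).den : ℤ) ∣ n := by
      have h1 : (((q*m+s:ℕ):ℤ) - ((s:ℕ):ℤ)) ∣ n := sub_dvd_pow_sub_pow _ _ j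
      have h2 : ((q:ℕ):ℤ) ∣ (((q*m+s:ℕ):ℤ) - ((s:ℕ):ℤ)) := by
        refine ⟨m, ?_⟩
        push_cast
        ring
      have h3 : (((c j).den : ℕ):ℤ) ∣ ((q:ℕ):ℤ) := by
        have := Finset.dvd_prod_of_mem (fun j => (c j).den) hj
        exact_mod_cast this
      exact dvd_trans h3 (dvd_trans h2 h1)
    obtain ⟨t, ht⟩ := hdvd
    refine ⟨(c j).num * t, ?_⟩
    have hQ : (c j) * (n : ℚ) = (((c j).num * t : ℤ) : ℚ) := by
      rw [hn] at ht
      rw [hn, ht]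
      push_cast
      rw [← mul_assoc]
      rw [show (c j) * ((c j).den : ℚ) = ((c j).num : ℚ) by exact_mod_cast Rat.mul_den_eq_num (c j)]
    have hR : (c j : ℝ) * (((q*m+s:ℕ):ℝ)^j - (s:ℝ)^j) = (((c j) * (n:ℚ) : ℚ) : ℝ) := by
      rw [hn]
      push_cast
      ring
    rw [hR, hQ]
    norm_cast
  refine (hWG.const_mul (e (r.eval (s:ℝ)))).congr_fun fun m => ?_
  obtain ⟨z, hz⟩ := hrint m
  have hfeval : f.eval (((q*m+s:ℕ)):ℝ) = G.eval (m:ℝ) + (r.eval (s:ℝ) + z) := by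
    have hfg : f.eval (((q*m+s:ℕ)):ℝ)
        = g.eval (((q*m+s:ℕ)):ℝ) + r.eval (((q*m+s:ℕ)):ℝ) := by
      rw [hgdef, Polynomial.eval_sub]
      ring
    rw [hfg, hGeval]
    linarith [hz]
  rw [hfeval, e_add, e_add, e_int z]
  ring

/-- Weyl equidistribution in exponential-sum form: if some
non-constant coefficient of `f ∈ ℝ[x]` is irrational, then the averages of
`e(f(n))` tend to zero. -/
theorem stmt_13 (f : Polynomial ℝ)
    (hf : ∃ n : ℕ, 1 ≤ n ∧ Irrational (f.coeff n)) :
    Tendsto (fun N : ℕ =>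
        (N : ℂ)⁻¹ * ∑ n ∈ Finset.Icc 1 N,
          Complex.exp (2 * Real.pi * Complex.I * ((f.eval (n : ℝ) : ℝ) : ℂ)))
      atTop (nhds 0) := by
  have hW := W_poly f hf
  set u : ℕ → ℂ := fun n => e (f.eval (n:ℝ)) with hu
  have hsum : ∀ N : ℕ, ∑ n ∈ Finset.Icc 1 N, u n
      = ∑ n ∈ Finset.range (N+1), u n - u 0 := by
    intro N
    have h1 : ∑ n ∈ Finset.Ico 0 1, u n + ∑ n ∈ Finset.Ico 1 (N+1), u n
        = ∑ n ∈ Finset.Ico 0 (N+1), u n :=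
      Finset.sum_Ico_consecutive u (by omega) (by omega)
    have h2 : Finset.Icc 1 N = Finset.Ico 1 (N+1) := by rw [Finset.Ico_add_one_right_eq_Icc]
    have h3 : ∑ n ∈ Finset.Ico 0 1, u n = u 0 := by simp
    rw [h2]
    rw [h3] at h1
    rw [← Finset.range_eq_Ico] at h1
    rw [← h1]
    ring
  have t1 : Tendsto (fun N : ℕ => (N:ℂ)⁻¹ * ∑ n ∈ Finset.range (N+1), u n)
      atTop (nhds 0) := by
    have hcomp : Tendsto (fun N : ℕ =>
        ‖∑ n ∈ Finset.range (N+1), u n‖ / ((N+1 : ℕ):ℝ)) atTop (nhds 0) :=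
      ((W_iff u).1 hW).comp (tendsto_add_atTop_nat 1)
    have hlim : Tendsto (fun N : ℕ =>
        2 * (‖∑ n ∈ Finset.range (N+1), u n‖ / ((N+1 : ℕ):ℝ))) atTop (nhds 0) := by
      have := hcomp.const_mul (2:ℝ)
      rwa [mul_zero] at this
    refine squeeze_zero_norm' ?_ hlim
    filter_upwards [eventually_ge_atTop 1] with N hN
    have hN1 : (1:ℝ) ≤ N := by exact_mod_cast hN
    have hNpos : (0:ℝ) < N := by linarith
    have hne : ‖(N:ℂ)⁻¹ * ∑ n ∈ Finset.range (N+1), u n‖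
        = ‖∑ n ∈ Finset.range (N+1), u n‖ / N := by
      rw [norm_mul, norm_inv, Complex.norm_natCast, div_eq_inv_mul]
    rw [hne]
    have hc : ((N+1 : ℕ):ℝ) = (N:ℝ) + 1 := by push_cast; ring
    rw [hc, mul_div_assoc']
    rw [div_le_div_iff₀ hNpos (by linarith)]
    nlinarith [norm_nonneg (∑ n ∈ Finset.range (N+1), u n)]
  have t2 : Tendsto (fun N : ℕ => (N:ℂ)⁻¹ * u 0) atTop (nhds 0) := by
    refine squeeze_zero_norm (a := fun N : ℕ => ‖u 0‖ / N) (fun N => ?_)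
      (tendsto_const_div_atTop_nhds_zero_nat _)
    have hEq : ‖(N:ℂ)⁻¹ * u 0‖ = ‖u 0‖ / (N:ℝ) := by
      rw [norm_mul, norm_inv, Complex.norm_natCast, div_eq_inv_mul]
    exact le_of_eq hEq
  have t3 := t1.sub t2
  rw [sub_zero] at t3
  refine t3.congr fun N => ?_
  show (N:ℂ)⁻¹ * (∑ n ∈ Finset.range (N+1), u n) - (N:ℂ)⁻¹ * u 0
      = (N:ℂ)⁻¹ * ∑ n ∈ Finset.Icc 1 N, u n
  rw [hsum N]
  ring
end

section
/- Let A(x) ∈ M_{d×d}(ℤ[x]) and let w ∈ ℤ^d be nonzero such that the entries of the row vector wᵗ(A(x) − A(0)) are ℤ-linearly independent polynomials. Then for all a ∈ ℤ^d and positive integers q with gcd(a₁,…,a_d,q) = 1, writing wᵗ(A(x) − A(0))·a = ∑_{j=1}^{D} b_j x^j, one has gcd(b₁, …, b_D, q) ≤ d! · (d · ‖A(x) − A(0)‖ · ‖w‖_∞)^d. -/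
open Polynomial Matrix

lemma aux_exists_det_ne_zero {K : Type*} [Field K] {d : ℕ} {ι : Type*} [DecidableEq ι]
    (v : Fin d → ι → K) (T : Finset ι)
    (hsupp : ∀ j i, i ∉ T → v j i = 0)
    (hli : LinearIndependent K v) :
    ∃ s : Fin d → ι, (∀ k, s k ∈ T) ∧ (Matrix.of fun k j => v j (s k)).det ≠ 0 := by
  classical
  set N : Matrix T (Fin d) K := Matrix.of (fun t j => v j (t : ι)) with hN
  have hNinj : Function.Injective (Matrix.toLin' N) := by
    rw [← LinearMap.ker_eq_bot, LinearMap.ker_eq_bot']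
    intro c hc
    have h0 : ∑ j, c j • v j = 0 := by
      funext i
      by_cases hi : i ∈ T
      · have := congrFun (congrArg (fun f => f) hc) (⟨i, hi⟩ : T)
        simp only [Matrix.toLin'_apply, Matrix.mulVec, dotProduct] at this
        simpa [N, Finset.sum_apply, smul_eq_mul, mul_comm] using this
      · simp [Finset.sum_apply, hsupp _ _ hi]
    funext j
    exact Fintype.linearIndependent_iff.mp hli c h0 j
  obtain ⟨g, hg⟩ := (Matrix.toLin' N).exists_leftInverse_of_injective
    (LinearMap.ker_eq_bot.mpr hNinj)
  set M : Matrix (Fin d) T K := LinearMap.toMatrix' g with hM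
  have hMN : M * N = 1 := by
    apply Matrix.toLin'.injective
    rw [Matrix.toLin'_mul, Matrix.toLin'_one]
    rw [hM, Matrix.toLin'_toMatrix']
    exact hg
  have h1 : (1 : K) =
      ∑ r ∈ Fintype.piFinset (fun _ : Fin d => (Finset.univ : Finset T)),
        (∏ i, M i (r i)) * (Matrix.of fun i j => N (r i) j).det := by
    have hrows : (M * N) = fun i => ∑ t ∈ (Finset.univ : Finset T), M i t • N t := by
      funext i j
      simp [Matrix.mul_apply, Finset.sum_apply, smul_eq_mul]
    calc (1 : K) = (M * N).det := by rw [hMN, Matrix.det_one]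
      _ = (Matrix.detRowAlternating : _) (fun i => ∑ t ∈ (Finset.univ : Finset T), M i t • N t) := by
          rw [← hrows]; rfl
      _ = ∑ r ∈ Fintype.piFinset (fun _ : Fin d => (Finset.univ : Finset T)),
            (Matrix.detRowAlternating : _) (fun i => M i (r i) • N (r i)) :=
          (Matrix.detRowAlternating.toMultilinearMap.map_sum_finset _ _)
      _ = ∑ r ∈ Fintype.piFinset (fun _ : Fin d => (Finset.univ : Finset T)),
            (∏ i, M i (r i)) * (Matrix.of fun i j => N (r i) j).det := by
          refine Finset.sum_congr rfl fun r _ => ?_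
          have := MultilinearMap.map_smul_univ Matrix.detRowAlternating.toMultilinearMap
            (fun i => M i (r i)) (fun i => N (r i))
          rw [show (Matrix.of fun i j => N (r i) j).det = Matrix.detRowAlternating (fun i => N (r i)) from rfl]
          simpa [smul_eq_mul] using this
  have : ∃ r ∈ Fintype.piFinset (fun _ : Fin d => (Finset.univ : Finset T)),
      (∏ i, M i (r i)) * (Matrix.of fun i j => N (r i) j).det ≠ 0 := by
    by_contra h
    push_neg at h
    rw [Finset.sum_eq_zero (by exact_mod_cast h)] at h1
    exact one_ne_zero h1
  obtain ⟨r, -, hr⟩ := this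
  refine ⟨fun k => (r k : ι), fun k => (r k).2, ?_⟩
  intro h0
  exact hr (by rw [show (Matrix.of fun i j => N (r i) j) = (Matrix.of fun k j => v j ((r k : ι)))
    from rfl, h0, mul_zero])

lemma key_lemma {d : ℕ} (u : Fin d → Polynomial ℤ)
    (hli : LinearIndependent ℤ u)
    (h0 : ∀ j, (u j).coeff 0 = 0)
    (a : Fin d → ℤ) (q : ℕ)
    (hgcd : Nat.gcd (Finset.univ.gcd fun i => (a i).natAbs) q = 1)
    (c : ℕ) (hc : ∀ j n, ((u j).coeff n).natAbs ≤ c) :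
    Nat.gcd (Finset.gcd (Finset.Icc 1 (∑ j, u j * C (a j)).natDegree)
        fun m => (((∑ j, u j * C (a j))).coeff m).natAbs) q
      ≤ d.factorial * c ^ d := by
  classical
  set p : Polynomial ℤ := ∑ j, u j * C (a j) with hp
  have hpc : ∀ n, p.coeff n = ∑ j, (u j).coeff n * a j := by
    intro n
    rw [hp, Polynomial.finset_sum_coeff]
    exact Finset.sum_congr rfl fun j _ => Polynomial.coeff_mul_C _ _ _
  -- coefficient vectors over ℚ
  let f : Polynomial ℤ →ₗ[ℤ] (ℕ → ℚ) :=
    { toFun := fun P => fun n => ((P.coeff n : ℤ) : ℚ)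
      map_add' := by intro P Q; funext n; simp
      map_smul' := by intro z P; funext n; simp }
  have hfinj : LinearMap.ker f = ⊥ := by
    rw [LinearMap.ker_eq_bot']
    intro P hP
    ext n
    have h2 : ((P.coeff n : ℤ) : ℚ) = 0 := congrFun hP n
    exact_mod_cast h2
  have hliQZ : LinearIndependent ℤ (f ∘ u) := hli.map' f hfinj
  have hliQ : LinearIndependent ℚ (f ∘ u) :=
    (LinearIndependent.iff_fractionRing ℤ ℚ).mp hliQZ
  set T : Finset ℕ := Finset.univ.biUnion (fun j => (u j).support) with hT
  have hT0 : (0 : ℕ) ∉ T := by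
    simp only [hT, Finset.mem_biUnion, Finset.mem_univ, true_and, not_exists]
    intro j hj
    exact (Polynomial.mem_support_iff.mp hj) (h0 j)
  obtain ⟨s, hsT, hdet⟩ := aux_exists_det_ne_zero (f ∘ u) T
    (by
      intro j n hn
      have : (u j).coeff n = 0 := by
        by_contra h
        exact hn (Finset.mem_biUnion.mpr ⟨j, Finset.mem_univ j, Polynomial.mem_support_iff.mpr h⟩)
      show ((u j).coeff n : ℚ) = 0
      rw [this]; simp)
    hliQ
  set Mz : Matrix (Fin d) (Fin d) ℤ := Matrix.of fun k j => (u j).coeff (s k) with hMz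
  have hdetz : Mz.det ≠ 0 := by
    intro h
    apply hdet
    have h2 : (Matrix.of fun k j => (f ∘ u) j (s k)) = Mz.map ⇑(Int.castRingHom ℚ) := rfl
    rw [h2]
    have h3 := ((Int.castRingHom ℚ).map_det Mz).symm
    rw [RingHom.mapMatrix_apply] at h3
    rw [h3, h]
    simp
  have hCramer : ∀ j, Mz.det * a j = ∑ k, Mz.adjugate j k * p.coeff (s k) := by
    intro j
    have h1 : Mz.adjugate *ᵥ (Mz *ᵥ a) = Mz.det • a := by
      rw [Matrix.mulVec_mulVec, Matrix.adjugate_mul, Matrix.smul_mulVec,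
        Matrix.one_mulVec]
    have h2 := congrFun h1 j
    simp only [Matrix.mulVec, dotProduct, Pi.smul_apply, smul_eq_mul] at h2
    rw [← h2]
    refine Finset.sum_congr rfl fun k _ => ?_
    congr 1
    rw [hpc]
    exact Finset.sum_congr rfl fun j' _ => rfl
  set g : ℕ := Nat.gcd (Finset.gcd (Finset.Icc 1 p.natDegree)
      fun m => (p.coeff m).natAbs) q with hg
  have hgq : g ∣ q := Nat.gcd_dvd_right _ _
  have hgdvd : ∀ m ∈ T, (g : ℤ) ∣ p.coeff m := by
    intro m hm
    have hm1 : 1 ≤ m := Nat.one_le_iff_ne_zero.mpr (fun h => hT0 (h ▸ hm))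
    by_cases hmd : m ≤ p.natDegree
    · have : g ∣ (p.coeff m).natAbs :=
        (Nat.gcd_dvd_left _ _).trans (Finset.gcd_dvd (Finset.mem_Icc.mpr ⟨hm1, hmd⟩))
      exact Int.dvd_natAbs.mp (Int.natCast_dvd_natCast.mpr this)
    · rw [Polynomial.coeff_eq_zero_of_natDegree_lt (lt_of_not_ge hmd)]
      exact dvd_zero _
  have hdvdj : ∀ j, (g : ℤ) ∣ Mz.det * a j := by
    intro j
    rw [hCramer j]
    exact Finset.dvd_sum fun k _ => Dvd.dvd.mul_left (hgdvd (s k) (hsT k)) _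
  have hdvdN : ∀ j, g ∣ Mz.det.natAbs * (a j).natAbs := by
    intro j
    have := Int.natAbs_dvd_natAbs.mpr (hdvdj j)
    simpa [Int.natAbs_mul] using this
  have hGg : g ∣ Mz.det.natAbs * Finset.univ.gcd fun i => (a i).natAbs := by
    have h1 : g ∣ Finset.univ.gcd fun j => Mz.det.natAbs * (a j).natAbs :=
      Finset.dvd_gcd fun j _ => hdvdN j
    rwa [Finset.gcd_mul_left, normalize_eq] at h1
  have hfin : g ∣ Mz.det.natAbs := by
    have h2 : g ∣ Mz.det.natAbs * q := Dvd.dvd.mul_left hgq _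
    have := Nat.dvd_gcd hGg h2
    rwa [Nat.gcd_mul_left, hgcd, mul_one] at this
  have hle : g ≤ Mz.det.natAbs :=
    Nat.le_of_dvd (Int.natAbs_pos.mpr hdetz) hfin
  -- determinant bound
  have hbound : Mz.det.natAbs ≤ d.factorial * c ^ d := by
    have habs : |Mz.det| ≤ (d.factorial : ℤ) • (c : ℤ) ^ Fintype.card (Fin d) := by
      have := Matrix.det_le (A := Mz) (abv := AbsoluteValue.abs)
        (x := (c : ℤ)) (fun i j => by
          have h := hc j (s i)
          show |Mz i j| ≤ (c : ℤ)
          rw [Int.abs_eq_natAbs]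
          exact_mod_cast h)
      simpa [Fintype.card_fin] using this
    have : (Mz.det.natAbs : ℤ) ≤ (d.factorial : ℤ) * (c : ℤ) ^ d := by
      rw [← Int.abs_eq_natAbs]
      simpa [Fintype.card_fin, nsmul_eq_mul] using habs
    exact_mod_cast this
  exact hle.trans hbound
/-- bounded multiplicative complexity of `wᵗA(x)` when the
entries of `wᵗ(A(x) − A(0))` are `ℤ`-linearly independent. -/
theorem stmt_16 (d : ℕ) (A : Matrix (Fin d) (Fin d) (Polynomial ℤ))
    (w : Fin d → ℤ) (hw : w ≠ 0)
    (hli : LinearIndependent ℤ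
      (Matrix.vecMul (fun i => C (w i))
        (A - Matrix.of fun i j => C ((A i j).eval 0))))
    (a : Fin d → ℤ) (q : ℕ) (hq : 0 < q)
    (hgcd : Nat.gcd (Finset.univ.gcd fun i => (a i).natAbs) q = 1) :
    letI B : Matrix (Fin d) (Fin d) (Polynomial ℤ) :=
      A - Matrix.of fun i j => C ((A i j).eval 0)
    letI p : Polynomial ℤ :=
      Matrix.vecMul (fun i => C (w i)) B ⬝ᵥ (fun j => C (a j))
    letI normB : ℕ := Finset.univ.sup fun i => Finset.univ.sup fun j =>
      (B i j).support.sup fun n => ((B i j).coeff n).natAbs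
    Nat.gcd (Finset.gcd (Finset.Icc 1 p.natDegree) fun j => (p.coeff j).natAbs) q
      ≤ d.factorial *
        (d * normB * Finset.univ.sup fun i => (w i).natAbs) ^ d := by
  classical
  set B : Matrix (Fin d) (Fin d) (Polynomial ℤ) :=
    A - Matrix.of fun i j => C ((A i j).eval 0) with hB
  set u : Fin d → Polynomial ℤ := Matrix.vecMul (fun i => C (w i)) B with hu
  set normB : ℕ := Finset.univ.sup fun i => Finset.univ.sup fun j =>
      (B i j).support.sup fun n => ((B i j).coeff n).natAbs with hnormB
  set W : ℕ := Finset.univ.sup fun i => (w i).natAbs with hW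
  have hB0 : ∀ i j, (B i j).coeff 0 = 0 := by
    intro i j
    show ((A - Matrix.of fun i j => C ((A i j).eval 0)) i j).coeff 0 = 0
    rw [Matrix.sub_apply, Polynomial.coeff_sub, Matrix.of_apply, Polynomial.coeff_C,
      Polynomial.coeff_zero_eq_eval_zero]
    simp
  have hucoeff : ∀ j n, (u j).coeff n = ∑ i, w i * (B i j).coeff n := by
    intro j n
    show ((Matrix.vecMul (fun i => C (w i)) B) j).coeff n = _
    simp [Matrix.vecMul, dotProduct, Polynomial.finset_sum_coeff, Polynomial.coeff_C_mul]
  have hu0 : ∀ j, (u j).coeff 0 = 0 := by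
    intro j
    rw [hucoeff]
    exact Finset.sum_eq_zero fun i _ => by rw [hB0 i j, mul_zero]
  have hBle : ∀ i j n, ((B i j).coeff n).natAbs ≤ normB := by
    intro i j n
    by_cases hn : n ∈ (B i j).support
    · calc ((B i j).coeff n).natAbs
          ≤ (B i j).support.sup fun m => ((B i j).coeff m).natAbs :=
            Finset.le_sup (f := fun m => ((B i j).coeff m).natAbs) hn
        _ ≤ Finset.univ.sup fun j' => (B i j').support.sup
              fun m => ((B i j').coeff m).natAbs :=
            Finset.le_sup (f := fun j' => (B i j').support.sup
              fun m => ((B i j').coeff m).natAbs) (Finset.mem_univ j)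
        _ ≤ normB := by
            rw [hnormB]
            exact Finset.le_sup (f := fun i' => Finset.univ.sup fun j' =>
              (B i' j').support.sup fun m => ((B i' j').coeff m).natAbs) (Finset.mem_univ i)
    · rw [Polynomial.notMem_support_iff.mp hn]
      exact Nat.zero_le _
  have hWle : ∀ i, (w i).natAbs ≤ W := fun i => by
    rw [hW]; exact Finset.le_sup (f := fun i => (w i).natAbs) (Finset.mem_univ i)
  have hc : ∀ j n, ((u j).coeff n).natAbs ≤ d * normB * W := by
    intro j n
    rw [hucoeff]
    calc (∑ i, w i * (B i j).coeff n).natAbs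
        ≤ ∑ i, (w i * (B i j).coeff n).natAbs := nat_abs_sum_le _ _
      _ ≤ ∑ _i : Fin d, normB * W := by
          refine Finset.sum_le_sum fun i _ => ?_
          rw [Int.natAbs_mul, mul_comm]
          exact Nat.mul_le_mul (hBle i j n) (hWle i)
      _ = d * normB * W := by
          rw [Finset.sum_const, Finset.card_univ, Fintype.card_fin, smul_eq_mul, mul_assoc]
  have hkey := key_lemma u hli hu0 a q hgcd (d * normB * W) hc
  have hpd : (Matrix.vecMul (fun i => C (w i)) B ⬝ᵥ fun j => C (a j))
      = ∑ j, u j * C (a j) := rfl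
  rw [hpd]
  exact hkey
end
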